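/- arXiv:1112.2411 — 5 statements merged into one kernel-verified Lean document; each statement's English description precedes it below -/
import Mathlib

section
/- For all real numbers 0 < p < q there is a constant C(p,q) < ∞ such that |||x|||_{f^q} ≤ C(p,q)·‖x‖_{f^p} for all x ∈ c₀₀. -/
/-- `f(x) = log₂(x+1)`; note `flog 0 = 0`. -/
noncomputable def flog (x : ℝ) : ℝ := Real.logb 2 (x + 1)

/-- The `n`-th largest value (1-indexed) of the sequence `(|x i|)`, i.e. the decreasing
rearrangement of `(|x i|)`. -/
noncomputable def drear (x : ℕ →₀ ℝ) (n : ℕ) : ℝ :=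
  sSup {t : ℝ | 0 ≤ t ∧ n ≤ (x.support.filter fun i => t ≤ |x i|).card}

/-- The norm `‖x‖_g = sup_{n₁ < … < n_l} (1/g(l)) ∑ |x_{n_i}|`. -/
noncomputable def gnorm (g : ℕ → ℝ) (x : ℕ →₀ ℝ) : ℝ :=
  sSup {r : ℝ | ∃ s : Finset ℕ, s.Nonempty ∧ r = (1 / g s.card) * ∑ i ∈ s, |x i|}

/-- The norm `|||x|||_g = ∑_{i ≥ 1} x_i^# / g(i)`. -/
noncomputable def tnorm (g : ℕ → ℝ) (x : ℕ →₀ ℝ) : ℝ :=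
  ∑ i ∈ Finset.range x.support.card, drear x (i + 1) / g (i + 1)


open Finset in
lemma exists_rearrangement (x : ℕ →₀ ℝ) :
    ∃ a : ℕ → ℝ,
      (∀ k, k < x.support.card → drear x (k + 1) = a k) ∧
      (∀ l, 1 ≤ l → l ≤ x.support.card → ∃ s : Finset ℕ, s.Nonempty ∧ s.card = l ∧
        ∑ i ∈ Finset.range l, a i = ∑ i ∈ s, |x i|) := by
  classical
  set n := x.support.card with hn
  set J : Fin n → ℕ := fun i => x.support.orderIsoOfFin rfl ((Tuple.sort
    (fun j : Fin n => |x ((x.support.orderIsoOfFin rfl j : ℕ))|)) i.rev) with hJ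
  set v : Fin n → ℝ := fun j => |x ((x.support.orderIsoOfFin rfl j : ℕ))| with hv
  set σ : Equiv.Perm (Fin n) := Tuple.sort v with hσ
  have hJ' : ∀ i, J i = (x.support.orderIsoOfFin rfl (σ i.rev) : ℕ) := fun i => rfl
  set w : Fin n → ℝ := fun i => |x (J i)| with hw
  have hwv : ∀ i, w i = v (σ i.rev) := fun i => rfl
  have hJinj : Function.Injective J := by
    intro i j hij
    rw [hJ', hJ'] at hij
    have h1 := Subtype.coe_injective hij
    have h2 := (x.support.orderIsoOfFin rfl).injective (Subtype.ext hij)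
    have h3 := σ.injective h2
    exact Fin.rev_injective h3
  have hJmem : ∀ i, J i ∈ x.support := fun i => (x.support.orderIsoOfFin rfl _).2
  have hwanti : Antitone w := by
    have hm : Monotone (v ∘ σ) := Tuple.monotone_sort v
    intro i j hij
    exact hm (by simpa [Fin.rev_le_rev] using hij)
  have hwnonneg : ∀ i, 0 ≤ w i := fun i => abs_nonneg _
  -- counting lemma
  have hcount : ∀ t : ℝ, (x.support.filter fun i => t ≤ |x i|).card
      = (Finset.univ.filter fun i : Fin n => t ≤ w i).card := by
    intro t
    symm
    apply Finset.card_bij (fun (i : Fin n) _ => J i)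
    · intro i hi
      simp only [mem_filter, mem_univ, true_and] at hi ⊢
      exact ⟨hJmem i, hi⟩
    · intro i _ j _ hij
      exact hJinj hij
    · intro b hb
      simp only [mem_filter] at hb
      obtain ⟨hb1, hb2⟩ := hb
      set j0 := (x.support.orderIsoOfFin rfl).symm ⟨b, hb1⟩ with hj0
      refine ⟨(σ.symm j0).rev, ?_, ?_⟩
      · simp only [mem_filter, mem_univ, true_and]
        have : J (σ.symm j0).rev = b := by
          rw [hJ', Fin.rev_rev, Equiv.apply_symm_apply, hj0]
          simp
        rw [hw]; simpa [this] using hb2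
      · rw [hJ', Fin.rev_rev, Equiv.apply_symm_apply, hj0]
        simp
  refine ⟨fun k => if h : k < n then w ⟨k, h⟩ else 0, ?_, ?_⟩
  · -- drear values
    intro k hk
    simp only [dif_pos hk]
    have hset : {t : ℝ | 0 ≤ t ∧ k + 1 ≤ (x.support.filter fun i => t ≤ |x i|).card}
        = Set.Icc 0 (w ⟨k, hk⟩) := by
      ext t
      simp only [Set.mem_setOf_eq, Set.mem_Icc, hcount]
      constructor
      · rintro ⟨ht0, htc⟩
        refine ⟨ht0, ?_⟩
        by_contra hlt
        push_neg at hlt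
        have hsub : (Finset.univ.filter fun i : Fin n => t ≤ w i)
            ⊆ Finset.univ.filter fun i : Fin n => (i : ℕ) < k := by
          intro i hi
          simp only [mem_filter, mem_univ, true_and] at hi ⊢
          by_contra hik
          push_neg at hik
          have : w i ≤ w ⟨k, hk⟩ := hwanti (by exact hik)
          linarith
        have hcard : (Finset.univ.filter fun i : Fin n => (i : ℕ) < k).card ≤ k := by
          have := Finset.card_le_card_of_injOn (fun i : Fin n => (i : ℕ))
            (s := Finset.univ.filter fun i : Fin n => (i : ℕ) < k)
            (t := Finset.range k)
            (fun i hi => by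
              simp only [mem_filter, mem_univ, true_and, Finset.coe_filter] at hi
              exact mem_range.mpr hi)
            (fun i _ j _ hij => Fin.ext hij)
          have h2 := Finset.card_range k
          omega
        have := (Finset.card_le_card hsub).trans hcard
        omega
      · rintro ⟨ht0, htw⟩
        refine ⟨ht0, ?_⟩
        have hsub : (Finset.univ.filter fun i : Fin n => (i : ℕ) ≤ k)
            ⊆ Finset.univ.filter fun i : Fin n => t ≤ w i := by
          intro i hi
          simp only [mem_filter, mem_univ, true_and] at hi ⊢
          have : w ⟨k, hk⟩ ≤ w i := hwanti (by exact hi)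
          linarith
        have hcard : k + 1 ≤ (Finset.univ.filter fun i : Fin n => (i : ℕ) ≤ k).card := by
          have := Finset.card_le_card_of_injOn
            (fun j : ℕ => (⟨min j k, lt_of_le_of_lt (min_le_right _ _) hk⟩ : Fin n))
            (s := Finset.range (k+1))
            (t := Finset.univ.filter fun i : Fin n => (i : ℕ) ≤ k)
            (fun j hj => by
              refine Finset.mem_filter.mpr ⟨Finset.mem_univ _, ?_⟩
              exact min_le_right _ _)
            (fun i hi j hj hij => by
              have hi' : i < k + 1 := by simpa using hi
              have hj' : j < k + 1 := by simpa using hj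
              have : min i k = min j k := congrArg Fin.val hij
              omega)
          have h2 := Finset.card_range (k+1)
          omega
        exact hcard.trans (Finset.card_le_card hsub)
    unfold drear
    rw [hset]
    exact csSup_Icc (hwnonneg _)
  · -- partial sums realized
    intro l hl hln
    refine ⟨Finset.image (fun j : Fin l => J (Fin.castLE hln j)) Finset.univ, ?_, ?_, ?_⟩
    · apply Finset.Nonempty.image
      exact ⟨⟨0, hl⟩, mem_univ _⟩
    · have hinj' : Function.Injective (fun j : Fin l => J (Fin.castLE hln j)) :=
        fun i j hij => Fin.castLE_injective hln (hJinj hij)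
      rw [Finset.card_image_of_injective _ hinj', Finset.card_univ, Fintype.card_fin]
    · rw [Finset.sum_image (by
        intro i _ j _ hij
        exact Fin.castLE_injective hln (hJinj hij))]
      rw [← Fin.sum_univ_eq_sum_range (fun k => if h : k < n then w ⟨k, h⟩ else 0) l]
      apply Finset.sum_congr rfl
      intro j _
      have hjn : (j : ℕ) < n := lt_of_lt_of_le j.2 hln
      simp only [dif_pos hjn]
      rfl

open Real in
lemma key_rpow_ineq {p q a b : ℝ} (hp : 0 < p) (hpq : p < q) (ha : 1 ≤ a) (hab : a ≤ b) :
    (a ^ (-q) - b ^ (-q)) * a ^ p ≤ q / (q - p) * (a ^ (-(q - p)) - b ^ (-(q - p))) := by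
  set ε := q - p with hε
  have hεpos : 0 < ε := by simp [hε]; linarith
  have hqpos : 0 < q := hp.trans hpq
  have ha0 : (0:ℝ) < a := lt_of_lt_of_le one_pos ha
  set h : ℝ → ℝ := fun t => q / ε * (a ^ (-ε) - t ^ (-ε)) - (a ^ (-q) - t ^ (-q)) * a ^ p with hh
  have hderiv : ∀ t : ℝ, 0 < t →
      HasDerivAt h (q / ε * (ε * t ^ (-ε - 1)) - q * t ^ (-q - 1) * a ^ p) t := by
    intro t ht
    have h1 : HasDerivAt (fun t : ℝ => t ^ (-ε)) (-ε * t ^ (-ε - 1)) t :=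
      Real.hasDerivAt_rpow_const (Or.inl (ne_of_gt ht))
    have h2 : HasDerivAt (fun t : ℝ => t ^ (-q)) (-q * t ^ (-q - 1)) t :=
      Real.hasDerivAt_rpow_const (Or.inl (ne_of_gt ht))
    have h3 : HasDerivAt (fun t : ℝ => a ^ (-ε) - t ^ (-ε)) (0 - -ε * t ^ (-ε - 1)) t :=
      (hasDerivAt_const t _).sub h1
    have h4 : HasDerivAt (fun t : ℝ => a ^ (-q) - t ^ (-q)) (0 - -q * t ^ (-q - 1)) t :=
      (hasDerivAt_const t _).sub h2
    have := ((h3.const_mul (q / ε)).sub (h4.mul_const (a ^ p)))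
    convert this using 1
    all_goals try rfl
    ring
  have hmono : MonotoneOn h (Set.Icc a b) := by
    apply monotoneOn_of_deriv_nonneg (convex_Icc a b)
    · intro t ht
      exact (hderiv t (lt_of_lt_of_le ha0 ht.1)).continuousAt.continuousWithinAt
    · intro t ht
      rw [interior_Icc] at ht
      exact (hderiv t (lt_of_lt_of_le ha0 ht.1.le)).differentiableAt.differentiableWithinAt
    · intro t ht
      rw [interior_Icc] at ht
      have htpos : 0 < t := lt_of_lt_of_le ha0 ht.1.le
      rw [(hderiv t htpos).deriv]
      have hqe : q / ε * (ε * t ^ (-ε - 1)) = q * t ^ (-ε - 1) := by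
        field_simp
      rw [hqe, sub_nonneg]
      have h1 : t ^ (-ε - 1) = t ^ (-q - 1) * t ^ p := by
        rw [← Real.rpow_add htpos]; congr 1; rw [hε]; ring
      rw [h1]
      have h2 : a ^ p ≤ t ^ p :=
        Real.rpow_le_rpow ha0.le ht.1.le hp.le
      have h3 : (0:ℝ) < t ^ (-q - 1) := Real.rpow_pos_of_pos htpos _
      calc q * t ^ (-q - 1) * a ^ p ≤ q * t ^ (-q - 1) * t ^ p := by
            apply mul_le_mul_of_nonneg_left h2; positivity
        _ = q * (t ^ (-q - 1) * t ^ p) := by ring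
  have hab' : h a ≤ h b := hmono (Set.left_mem_Icc.mpr hab) (Set.right_mem_Icc.mpr hab) hab
  have hha : h a = 0 := by simp [hh]
  rw [hha] at hab'
  simp only [hh] at hab'
  linarith





lemma one_le_flog_nat {l : ℕ} (hl : 1 ≤ l) : 1 ≤ flog l := by
  have h2 : Real.logb 2 2 = 1 := by simp
  rw [← h2]
  unfold flog
  apply Real.logb_le_logb_of_le (by norm_num) (by norm_num)
  have : (1:ℝ) ≤ (l:ℝ) := by exact_mod_cast hl
  linarith

lemma flog_nat_mono : Monotone (fun l : ℕ => flog l) := by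
  intro a b hab
  unfold flog
  apply Real.logb_le_logb_of_le (by norm_num) (by positivity)
  have : (a:ℝ) ≤ b := by exact_mod_cast hab
  linarith

lemma one_le_flog_rpow {l : ℕ} {r : ℝ} (hl : 1 ≤ l) (hr : 0 ≤ r) : 1 ≤ flog l ^ r := by
  calc (1:ℝ) = 1 ^ r := (Real.one_rpow r).symm
    _ ≤ flog l ^ r := Real.rpow_le_rpow zero_le_one (one_le_flog_nat hl) hr

open Finset in
theorem exists_bound_tnorm_le_gnorm (p q : ℝ) (hp : 0 < p) (hpq : p < q) :
    ∃ C : ℝ, ∀ x : ℕ →₀ ℝ,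
      tnorm (fun l => flog l ^ q) x ≤ C * gnorm (fun l => flog l ^ p) x := by
  classical
  set ε := q - p with hε
  have hεpos : 0 < ε := by simp [hε]; linarith
  have hq : 0 < q := hp.trans hpq
  refine ⟨1 + q / ε, ?_⟩
  intro x
  obtain ⟨a, hdrear, hsum⟩ := exists_rearrangement x
  set n := x.support.card with hn
  set N := gnorm (fun l => flog l ^ p) x with hN
  set A := {r : ℝ | ∃ s : Finset ℕ, s.Nonempty ∧
    r = (1 / ((fun l : ℕ => flog l ^ p) s.card)) * ∑ i ∈ s, |x i|} with hA
  have hBdd : BddAbove A := by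
    refine ⟨∑ i ∈ x.support, |x i|, ?_⟩
    rintro r ⟨s, hs, rfl⟩
    have h1 : ∑ i ∈ s, |x i| = ∑ i ∈ s ∩ x.support, |x i| := by
      apply (Finset.sum_subset (Finset.inter_subset_left) ?_).symm
      intro i hi hi2
      have : i ∉ x.support := fun h => hi2 (Finset.mem_inter.mpr ⟨hi, h⟩)
      simp [Finsupp.notMem_support_iff.mp this]
    have h2 : ∑ i ∈ s ∩ x.support, |x i| ≤ ∑ i ∈ x.support, |x i| :=
      Finset.sum_le_sum_of_subset_of_nonneg (Finset.inter_subset_right)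
        (fun i _ _ => abs_nonneg _)
    have h3 : ∑ i ∈ s, |x i| ≤ ∑ i ∈ x.support, |x i| := h1 ▸ h2
    have hg1 : 1 ≤ flog s.card ^ p := one_le_flog_rpow (Finset.card_pos.mpr hs) hp.le
    have hgpos : (0:ℝ) < flog s.card ^ p := lt_of_lt_of_le one_pos hg1
    have : (1 / flog s.card ^ p) * ∑ i ∈ s, |x i| ≤ ∑ i ∈ s, |x i| := by
      apply mul_le_of_le_one_left (Finset.sum_nonneg fun i _ => abs_nonneg _)
      rw [div_le_one hgpos]
      exact hg1
    exact this.trans h3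
  have hN0 : 0 ≤ N := by
    have hmem : (1 / ((fun l : ℕ => flog l ^ p) ({0} : Finset ℕ).card)) * ∑ i ∈ ({0} : Finset ℕ), |x i| ∈ A :=
      ⟨{0}, Finset.singleton_nonempty 0, rfl⟩
    have h1 := le_csSup hBdd hmem
    have h2 : (0:ℝ) ≤ (1 / ((fun l : ℕ => flog l ^ p) ({0} : Finset ℕ).card)) * ∑ i ∈ ({0} : Finset ℕ), |x i| := by
      apply mul_nonneg
      · apply div_nonneg zero_le_one
        exact le_trans zero_le_one (one_le_flog_rpow (by simp) hp.le)
      · exact Finset.sum_nonneg fun i _ => abs_nonneg _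
    exact h2.trans h1
  have hS : ∀ l, 1 ≤ l → l ≤ n → ∑ i ∈ Finset.range l, a i ≤ flog l ^ p * N := by
    intro l hl hln
    obtain ⟨s, hs, hcard, hsum'⟩ := hsum l hl hln
    have hmem : (1 / ((fun l : ℕ => flog l ^ p) s.card)) * ∑ i ∈ s, |x i| ∈ A :=
      ⟨s, hs, rfl⟩
    have h1 := le_csSup hBdd hmem
    rw [hcard] at h1
    have hgpos : (0:ℝ) < flog l ^ p :=
      lt_of_lt_of_le one_pos (one_le_flog_rpow hl hp.le)
    rw [hsum']
    calc ∑ i ∈ s, |x i| = flog l ^ p * ((1 / flog l ^ p) * ∑ i ∈ s, |x i|) := by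
          field_simp
      _ ≤ flog l ^ p * N := mul_le_mul_of_nonneg_left h1 hgpos.le
  -- rewrite tnorm as sum f i • a i
  set f : ℕ → ℝ := fun i => 1 / flog ((i+1 : ℕ) : ℝ) ^ q with hf
  have htn : tnorm (fun l => flog l ^ q) x = ∑ i ∈ Finset.range n, f i • a i := by
    unfold tnorm
    rw [← hn]
    apply Finset.sum_congr rfl
    intro i hi
    rw [smul_eq_mul, hdrear i (Finset.mem_range.mp hi), hf]
    simp only []
    rw [div_eq_mul_inv, one_div, mul_comm]
  rcases Nat.eq_zero_or_pos n with hn0 | hn1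
  · rw [htn, hn0]
    simp only [Finset.range_zero, Finset.sum_empty]
    have : 0 ≤ q / ε := by positivity
    nlinarith [hN0]
  -- main case
  have hFmono : ∀ i : ℕ, flog ((i+1:ℕ):ℝ) ≤ flog ((i+2:ℕ):ℝ) := fun i =>
    flog_nat_mono (by omega)
  have hfanti : ∀ i : ℕ, 0 ≤ f i - f (i+1) := by
    intro i
    simp only [hf]
    have h1 : (0:ℝ) < flog ((i+1:ℕ):ℝ) ^ q :=
      lt_of_lt_of_le one_pos (one_le_flog_rpow (by omega) hq.le)
    have h2 : flog ((i+1:ℕ):ℝ) ^ q ≤ flog ((i+1+1:ℕ):ℝ) ^ q := by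
      apply Real.rpow_le_rpow (le_trans zero_le_one (one_le_flog_nat (by omega)))
        (by exact_mod_cast hFmono i) hq.le
    have := one_div_le_one_div_of_le h1 h2
    linarith
  rw [htn, Finset.sum_range_by_parts]
  -- bound the two parts
  have hterm1 : f (n-1) • (∑ i ∈ Finset.range n, a i) ≤ N := by
    rw [smul_eq_mul]
    have hn1' : n - 1 + 1 = n := Nat.succ_pred_eq_of_pos hn1
    have hSn := hS n hn1 le_rfl
    have hfpos : 0 < f (n-1) := by
      simp only [hf, hn1']
      exact div_pos one_pos (lt_of_lt_of_le one_pos (one_le_flog_rpow hn1 hq.le))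
    calc f (n-1) * (∑ i ∈ Finset.range n, a i) ≤ f (n-1) * (flog n ^ p * N) :=
          mul_le_mul_of_nonneg_left hSn hfpos.le
      _ = (flog n ^ p / flog n ^ q) * N := by
          simp only [hf, hn1']; ring
      _ ≤ 1 * N := by
          apply mul_le_mul_of_nonneg_right ?_ hN0
          rw [div_le_one (lt_of_lt_of_le one_pos (one_le_flog_rpow hn1 hq.le))]
          exact Real.rpow_le_rpow_of_exponent_le (one_le_flog_nat hn1) hpq.le
      _ = N := one_mul N
  have hterm2 : -∑ i ∈ Finset.range (n-1), (f (i+1) - f i) • (∑ j ∈ Finset.range (i+1), a j)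
      ≤ q / ε * N := by
    rw [← Finset.sum_neg_distrib]
    have hstep : ∀ i ∈ Finset.range (n-1),
        -((f (i+1) - f i) • (∑ j ∈ Finset.range (i+1), a j))
        ≤ q / ε * (flog ((i+1:ℕ):ℝ) ^ (-ε) - flog ((i+2:ℕ):ℝ) ^ (-ε)) * N := by
      intro i hi
      have hin : i + 1 ≤ n := by
        have := Finset.mem_range.mp hi; omega
      rw [smul_eq_mul, neg_mul_eq_neg_mul, neg_sub]
      have hS' := hS (i+1) (by omega) hin
      calc (f i - f (i+1)) * (∑ j ∈ Finset.range (i+1), a j)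
          ≤ (f i - f (i+1)) * (flog ((i+1:ℕ):ℝ) ^ p * N) :=
            mul_le_mul_of_nonneg_left hS' (hfanti i)
        _ = ((f i - f (i+1)) * flog ((i+1:ℕ):ℝ) ^ p) * N := by ring
        _ ≤ (q / ε * (flog ((i+1:ℕ):ℝ) ^ (-ε) - flog ((i+2:ℕ):ℝ) ^ (-ε))) * N := by
            apply mul_le_mul_of_nonneg_right ?_ hN0
            have ha1 : 1 ≤ flog ((i+1:ℕ):ℝ) := one_le_flog_nat (by omega)
            have key := key_rpow_ineq hp hpq ha1 (hFmono i)
            have hconv : ∀ m : ℕ, 1 ≤ m → (1:ℝ) / flog (m:ℝ) ^ q = flog (m:ℝ) ^ (-q) := by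
              intro m hm
              rw [Real.rpow_neg (le_trans zero_le_one (one_le_flog_nat hm)), one_div]
            have e1 : f i = flog ((i+1:ℕ):ℝ) ^ (-q) := by
              simp only [hf]; exact hconv (i+1) (by omega)
            have e2 : f (i+1) = flog ((i+2:ℕ):ℝ) ^ (-q) := by
              simp only [hf]
              have : ((i+1+1:ℕ):ℝ) = ((i+2:ℕ):ℝ) := by push_cast; ring
              rw [this]
              exact hconv (i+2) (by omega)
            rw [e1, e2, ← hε] at *
            exact key
    have h2 := Finset.sum_le_sum hstep
    have h3 : ∑ i ∈ Finset.range (n-1),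
        q / ε * (flog ((i+1:ℕ):ℝ) ^ (-ε) - flog ((i+2:ℕ):ℝ) ^ (-ε)) * N
        = q / ε * N * ∑ i ∈ Finset.range (n-1),
          (flog ((i+1:ℕ):ℝ) ^ (-ε) - flog ((i+2:ℕ):ℝ) ^ (-ε)) := by
      rw [Finset.mul_sum]
      apply Finset.sum_congr rfl
      intro i _
      ring
    have h4 : ∑ i ∈ Finset.range (n-1),
        (flog ((i+1:ℕ):ℝ) ^ (-ε) - flog ((i+2:ℕ):ℝ) ^ (-ε))
        = flog ((1:ℕ):ℝ) ^ (-ε) - flog ((n-1+1:ℕ):ℝ) ^ (-ε) := by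
      have := Finset.sum_range_sub' (fun i => flog ((i+1:ℕ):ℝ) ^ (-ε)) (n-1)
      convert this using 2 with i
    have h5 : flog ((1:ℕ):ℝ) ^ (-ε) = 1 := by
      have : flog ((1:ℕ):ℝ) = 1 := by
        unfold flog; norm_num
      rw [this, Real.one_rpow]
    have h6 : 0 ≤ flog ((n-1+1:ℕ):ℝ) ^ (-ε) :=
      Real.rpow_nonneg (le_trans zero_le_one (one_le_flog_nat (by omega))) _
    calc ∑ i ∈ Finset.range (n-1), -((f (i+1) - f i) • (∑ j ∈ Finset.range (i+1), a j))
        ≤ q / ε * N * ∑ i ∈ Finset.range (n-1),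
          (flog ((i+1:ℕ):ℝ) ^ (-ε) - flog ((i+2:ℕ):ℝ) ^ (-ε)) := by rw [← h3]; exact h2
      _ = q / ε * N * (1 - flog ((n-1+1:ℕ):ℝ) ^ (-ε)) := by rw [h4, h5]
      _ ≤ q / ε * N * 1 := by
          apply mul_le_mul_of_nonneg_left (by linarith) (by positivity)
      _ = q / ε * N := by ring
  have := add_le_add hterm1 hterm2
  rw [sub_eq_add_neg]
  linarith
end

section
/- For all real numbers 0 < p < q, the series Σ_{n=1}^∞ (f(n)^p − f(n−1)^p)/f(n)^q converges (with f(0)=0). -/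
theorem key_ineq (s a b : ℝ) (hs : 1 < s) (ha : 0 < a) (hab : a ≤ b) :
    (b - a) / b ^ s ≤ 1 / (s - 1) * (a ^ (1 - s) - b ^ (1 - s)) := by
  have hb : 0 < b := lt_of_lt_of_le ha hab
  have hs' : 0 < s - 1 := by linarith
  have hX0 : 0 < a ^ (s - 1) := Real.rpow_pos_of_pos ha _
  have hY0 : 0 < b ^ (s - 1) := Real.rpow_pos_of_pos hb _
  have h1 : (b - a) / b ≤ Real.log (b / a) := by
    have h := Real.log_le_sub_one_of_pos (show (0:ℝ) < a / b from div_pos ha hb)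
    rw [Real.log_div ha.ne' hb.ne'] at h
    rw [Real.log_div hb.ne' ha.ne']
    have e : (b - a) / b = 1 - a / b := by field_simp
    rw [e]; linarith
  have hba : 0 < b / a := div_pos hb ha
  have h2 : (s - 1) * Real.log (b / a) ≤ (b / a) ^ (s - 1) - 1 := by
    have h := Real.log_le_sub_one_of_pos (Real.rpow_pos_of_pos hba (s - 1))
    rwa [Real.log_rpow hba] at h
  have h3 : (b / a) ^ (s - 1) = b ^ (s - 1) / a ^ (s - 1) := Real.div_rpow hb.le ha.le _
  have key : (s - 1) * ((b - a) / b) ≤ b ^ (s - 1) / a ^ (s - 1) - 1 := by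
    calc (s - 1) * ((b - a) / b) ≤ (s - 1) * Real.log (b / a) :=
          mul_le_mul_of_nonneg_left h1 hs'.le
      _ ≤ (b / a) ^ (s - 1) - 1 := h2
      _ = _ := by rw [h3]
  have ea : a ^ (1 - s) = (a ^ (s - 1))⁻¹ := by
    rw [show (1 - s) = -(s - 1) by ring, Real.rpow_neg ha.le]
  have eb : b ^ (1 - s) = (b ^ (s - 1))⁻¹ := by
    rw [show (1 - s) = -(s - 1) by ring, Real.rpow_neg hb.le]
  have ebs : b ^ s = b * b ^ (s - 1) := by
    rw [Real.rpow_sub hb, Real.rpow_one]; field_simp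
  rw [ea, eb, ebs]
  field_simp at key ⊢
  try rw [div_le_div_iff₀ (by positivity) (by positivity)] at key ⊢
  nlinarith [mul_le_mul_of_nonneg_right key (mul_pos hX0 hY0).le, mul_pos hX0 hY0,
    mul_pos hb hX0, mul_pos (mul_pos hb hX0) hY0, hs', hb]

theorem summable_increments_div (p q : ℝ) (hp : 0 < p) (hpq : p < q) :
    Summable (fun n : ℕ => (flog (n + 1) ^ p - flog n ^ p) / flog (n + 1) ^ q) := by
  have hq : 0 < q := hp.trans hpq
  set s : ℝ := q / p with hsdef
  have hs1 : 1 < s := (one_lt_div hp).mpr hpq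
  have hs1' : (0:ℝ) < s - 1 := by linarith
  have hf1 : ∀ n : ℕ, 1 ≤ flog ((n : ℝ) + 1) := by
    intro n
    unfold flog
    rw [show ((n : ℝ) + 1 + 1) = (n : ℝ) + 2 by ring]
    calc (1 : ℝ) = Real.logb 2 2 := (Real.logb_self_eq_one (by norm_num)).symm
      _ ≤ Real.logb 2 ((n : ℝ) + 2) := by
          rw [Real.logb_le_logb (by norm_num) (by norm_num) (by positivity)]
          have : (0 : ℝ) ≤ (n : ℝ) := Nat.cast_nonneg n
          linarith
  have hfpos : ∀ n : ℕ, 0 < flog ((n : ℝ) + 1) := fun n => lt_of_lt_of_le one_pos (hf1 n)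
  have hf0 : ∀ n : ℕ, 0 ≤ flog (n : ℝ) := by
    intro n
    apply Real.logb_nonneg (by norm_num)
    have : (0 : ℝ) ≤ (n : ℝ) := Nat.cast_nonneg n
    linarith
  have hmono : ∀ n : ℕ, flog (n : ℝ) ≤ flog ((n : ℝ) + 1) := by
    intro n
    unfold flog
    rw [Real.logb_le_logb (by norm_num) (by positivity) (by positivity)]
    linarith
  have hmono' : ∀ n : ℕ, flog ((n : ℝ) + 1) ≤ flog ((n : ℝ) + 1 + 1) := by
    intro n
    unfold flog
    rw [Real.logb_le_logb (by norm_num) (by positivity) (by positivity)]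
    linarith
  have hterm_nonneg : ∀ n : ℕ,
      0 ≤ (flog ((n : ℝ) + 1) ^ p - flog (n : ℝ) ^ p) / flog ((n : ℝ) + 1) ^ q := by
    intro n
    apply div_nonneg
    · have := Real.rpow_le_rpow (hf0 n) (hmono n) hp.le
      linarith
    · exact (Real.rpow_pos_of_pos (hfpos n) q).le
  set c : ℕ → ℝ := fun n => flog ((n : ℝ) + 1) ^ (p - q) with hc
  have hc_nonneg : ∀ n, 0 ≤ c n := fun n => (Real.rpow_pos_of_pos (hfpos n) _).le
  have hc_anti : ∀ n : ℕ, c (n + 1) ≤ c n := by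
    intro n
    simp only [hc]
    push_cast
    exact Real.rpow_le_rpow_of_nonpos (hfpos n) (hmono' n) (by linarith)
  have hd : Summable (fun n : ℕ => c n - c (n + 1)) := by
    apply summable_of_sum_range_le (c := c 0)
    · intro n; have := hc_anti n; linarith
    · intro n
      rw [Finset.sum_range_sub' c n]
      have := hc_nonneg n
      linarith
  have hC : Summable (fun n : ℕ => 1 / (s - 1) * (c n - c (n + 1))) := hd.mul_left _
  rw [← summable_nat_add_iff 1]
  apply hC.of_nonneg_of_le
  · intro n
    exact hterm_nonneg (n + 1)
  · intro n
    -- the key bound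
    have hF1 : 0 < flog ((n : ℝ) + 1) := hfpos n
    have hF2 : 0 < flog ((n : ℝ) + 1 + 1) := by
      have := hfpos (n + 1); push_cast at this; exact this
    have hab : flog ((n : ℝ) + 1) ^ p ≤ flog ((n : ℝ) + 1 + 1) ^ p :=
      Real.rpow_le_rpow hF1.le (hmono' n) hp.le
    have key := key_ineq s (flog ((n : ℝ) + 1) ^ p) (flog ((n : ℝ) + 1 + 1) ^ p) hs1
      (Real.rpow_pos_of_pos hF1 p) hab
    have e1 : (flog ((n : ℝ) + 1 + 1) ^ p) ^ s = flog ((n : ℝ) + 1 + 1) ^ q := by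
      rw [← Real.rpow_mul hF2.le]
      congr 1
      rw [hsdef]
      field_simp
    have e2 : (flog ((n : ℝ) + 1) ^ p) ^ (1 - s) = c n := by
      rw [← Real.rpow_mul hF1.le]
      simp only [hc]
      congr 1
      rw [hsdef]
      field_simp
    have e3 : (flog ((n : ℝ) + 1 + 1) ^ p) ^ (1 - s) = c (n + 1) := by
      rw [← Real.rpow_mul hF2.le]
      simp only [hc]
      push_cast
      congr 1
      rw [hsdef]
      field_simp
    rw [e1, e2, e3] at key
    push_cast
    exact key
end

section
/- For every x ∈ c₀₀ one has ‖x‖_S ≤ |||x|||_f. -/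
/-- The coordinatewise restriction `E(x)` of `x` to a finite set `E`. -/
noncomputable def restrictF (E : Finset ℕ) (x : ℕ →₀ ℝ) : ℕ →₀ ℝ :=
  ∑ i ∈ E, Finsupp.single i (x i)

/-- The sup-norm `‖x‖_∞` of `x ∈ c₀₀`. -/
noncomputable def supNorm (x : ℕ →₀ ℝ) : ℝ := sSup (Set.range fun i => |x i|)

/-- `E` is an interval of natural numbers. -/
def IsNatInterval (E : Finset ℕ) : Prop := ∃ a b : ℕ, E = Finset.Icc a b

/-- `NS` is a norm on `c₀₀` satisfying the implicit equation defining Schlumprecht's space `S`,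
whose unit vector basis is moreover normalized, 1-unconditional and 1-spreading, and which gives
norm one to the vectors `(f(n)/n)·∑_{i ∈ A} e_i`, `|A| = n`. -/
structure IsSNorm (NS : (ℕ →₀ ℝ) → ℝ) : Prop where
  nonneg : ∀ x, 0 ≤ NS x
  eq_zero : ∀ x, NS x = 0 → x = 0
  smul : ∀ (c : ℝ) (x : ℕ →₀ ℝ), NS (c • x) = |c| * NS x
  add_le : ∀ x y, NS (x + y) ≤ NS x + NS y
  implicit : ∀ x, NS x = max (supNorm x)
    (sSup {r : ℝ | ∃ l : ℕ, 2 ≤ l ∧ ∃ E : Fin l → Finset ℕ,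
      (∀ i, IsNatInterval (E i)) ∧
      (∀ i j : Fin l, i < j → ∀ s ∈ E i, ∀ t ∈ E j, s < t) ∧
      r = (1 / flog l) * ∑ i, NS (restrictF (E i) x)})
  spreading : ∀ (l : ℕ) (a ε : Fin l → ℝ) (n : Fin l → ℕ), StrictMono n →
    (∀ i, ε i = 1 ∨ ε i = -1) →
    NS (∑ i, (a i * ε i) • Finsupp.single (n i) (1 : ℝ)) =
      NS (∑ i, a i • Finsupp.single (i : ℕ) (1 : ℝ))
  const_one : ∀ n : ℕ, 1 ≤ n → ∀ A : Finset ℕ, A.card = n →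
    NS ((flog n / n) • ∑ i ∈ A, Finsupp.single i (1 : ℝ)) = 1

lemma flog_zero : flog 0 = 0 := by simp [flog]

lemma flog_nat_mono_s11 {a b : ℕ} (h : a ≤ b) : flog a ≤ flog b := by
  have h' : (a:ℝ) ≤ (b:ℝ) := by exact_mod_cast h
  exact Real.logb_le_logb_of_le one_lt_two (by positivity) (by linarith)

lemma flog_nat_pos {n : ℕ} (hn : 1 ≤ n) : 0 < flog n := by
  have : (1:ℝ) < (n:ℝ) + 1 := by
    have : (1:ℝ) ≤ (n:ℝ) := by exact_mod_cast hn
    linarith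
  exact Real.logb_pos one_lt_two this

lemma IsSNorm.zero {NS} (h : IsSNorm NS) : NS 0 = 0 := by
  have := h.smul 0 0
  simpa using this

lemma IsSNorm.sum_le {NS} (h : IsSNorm NS) {α : Type*} (s : Finset α) (y : α → (ℕ →₀ ℝ)) :
    NS (∑ k ∈ s, y k) ≤ ∑ k ∈ s, NS (y k) := by
  classical
  induction s using Finset.cons_induction with
  | empty => simp [h.zero]
  | cons a s ha ih =>
    rw [Finset.sum_cons, Finset.sum_cons]
    exact le_trans (h.add_le _ _) (by linarith)

lemma IsSNorm.signs {NS} (h : IsSNorm NS) (A : Finset ℕ) (hA : A.Nonempty) (ε : ℕ → ℝ)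
    (hε : ∀ i, ε i = 1 ∨ ε i = -1) :
    NS (∑ i ∈ A, ε i • Finsupp.single i (1:ℝ)) = A.card / flog A.card := by
  classical
  set l := A.card with hl
  have hl1 : 1 ≤ l := Finset.card_pos.mpr hA
  set emb := A.orderEmbOfFin hl.symm with hemb
  have h1 := h.spreading l (fun _ => 1) (fun i => ε (emb i)) (fun i => emb i)
    emb.strictMono (fun i => hε _)
  simp only [one_mul, one_smul] at h1
  have himg : Finset.image (fun i : Fin l => (emb i : ℕ)) Finset.univ = A := by
    ext a
    simp only [Finset.mem_image, Finset.mem_univ, true_and]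
    constructor
    · rintro ⟨i, rfl⟩; exact Finset.orderEmbOfFin_mem A hl.symm i
    · intro haA
      have : a ∈ Set.range emb := by
        rw [Finset.range_orderEmbOfFin]; exact haA
      obtain ⟨i, hi⟩ := this
      exact ⟨i, hi⟩
  have hL : (∑ i : Fin l, ε (emb i) • Finsupp.single (emb i) (1:ℝ))
      = ∑ i ∈ A, ε i • Finsupp.single i (1:ℝ) := by
    rw [← himg, Finset.sum_image (fun a _ b _ hab => emb.injective hab)]
  have hR : (∑ i : Fin l, Finsupp.single (i:ℕ) (1:ℝ))
      = ∑ i ∈ Finset.range l, Finsupp.single i (1:ℝ) :=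
    Fin.sum_univ_eq_sum_range (fun i => Finsupp.single i (1:ℝ)) l
  rw [hL, hR] at h1
  have h2 := h.const_one l hl1 (Finset.range l) (Finset.card_range l)
  rw [h.smul] at h2
  have hfpos : 0 < flog l := flog_nat_pos hl1
  have hlpos : (0:ℝ) < l := by exact_mod_cast hl1
  have habs : |flog l / (l:ℝ)| = flog l / l := abs_of_pos (by positivity)
  rw [habs] at h2
  rw [h1]
  field_simp at h2 ⊢
  linarith [h2]

theorem snorm_le_tnorm_flog (NS : (ℕ →₀ ℝ) → ℝ) (hNS : IsSNorm NS) (x : ℕ →₀ ℝ) :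
    NS x ≤ tnorm (fun i => flog i) x := by
  classical
  rcases Nat.eq_zero_or_pos x.support.card with h0 | hmpos
  · have hx : x = 0 := Finsupp.support_eq_empty.mp (Finset.card_eq_zero.mp h0)
    rw [hx, hNS.zero]
    simp [tnorm]
  set m := x.support.card with hm
  set e := x.support.orderEmbOfFin hm.symm with he
  set σ := Tuple.sort (fun j : Fin m => -|x (e j)|) with hσ
  set idx : Fin m → ℕ := fun k => e (σ k) with hidx
  have hmono : Monotone ((fun j : Fin m => -|x (e j)|) ∘ σ) := Tuple.monotone_sort _
  have hanti : ∀ j k : Fin m, j ≤ k → |x (idx k)| ≤ |x (idx j)| := by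
    intro j k hjk
    have := hmono hjk
    simp only [Function.comp_apply, neg_le_neg_iff] at this
    exact this
  have hidx_mem : ∀ k, idx k ∈ x.support := fun k => Finset.orderEmbOfFin_mem _ _ _
  have hidx_inj : Function.Injective idx := fun a b hab => σ.injective (e.injective hab)
  -- extended versions
  set idx' : ℕ → ℕ := fun k => if h : k < m then idx ⟨k, h⟩ else 0 with hidx'
  set v' : ℕ → ℝ := fun k => if h : k < m then |x (idx ⟨k, h⟩)| else 0 with hv'
  set ε' : ℕ → ℝ := fun i => if x i < 0 then -1 else 1 with hε'
  have hεpm : ∀ i, ε' i = 1 ∨ ε' i = -1 := by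
    intro i; by_cases h : x i < 0 <;> simp [hε', h]
  have hv'nonneg : ∀ k, 0 ≤ v' k := by
    intro k; by_cases h : k < m <;> simp [hv', h, abs_nonneg]
  have hv'anti : ∀ j k : ℕ, j ≤ k → v' k ≤ v' j := by
    intro j k hjk
    by_cases hk : k < m
    · have hj : j < m := lt_of_le_of_lt hjk hk
      simp only [hv', dif_pos hk, dif_pos hj]
      exact hanti ⟨j, hj⟩ ⟨k, hk⟩ hjk
    · simp only [hv', dif_neg hk]
      exact hv'nonneg j
  have hv'm : v' m = 0 := by simp [hv']
  have hidx'_injOn : ∀ a < m, ∀ b < m, idx' a = idx' b → a = b := by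
    intro a ha b hb hab
    simp only [hidx', dif_pos ha, dif_pos hb] at hab
    have := hidx_inj hab
    exact congrArg Fin.val (Fin.mk.injEq .. ▸ this : (⟨a, ha⟩ : Fin m) = ⟨b, hb⟩)
  have hidx'_mem : ∀ k < m, idx' k ∈ x.support := by
    intro k hk; simp only [hidx', dif_pos hk]; exact hidx_mem _
  have hval : ∀ k < m, x (idx' k) = ε' (idx' k) * v' k := by
    intro k hk
    simp only [hidx', hv', dif_pos hk, hε']
    by_cases h : x (idx ⟨k, hk⟩) < 0
    · rw [if_pos h, abs_of_neg h]; ring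
    · rw [if_neg h, abs_of_nonneg (not_lt.mp h)]; ring
  -- image of range m is support
  have hcard_image : ∀ n ≤ m, ((Finset.range n).image idx').card = n := by
    intro n hn
    rw [Finset.card_image_of_injOn, Finset.card_range]
    intro a ha b hb hab
    simp only [Finset.coe_range, Set.mem_Iio] at ha hb
    exact hidx'_injOn a (lt_of_lt_of_le ha hn) b (lt_of_lt_of_le hb hn) hab
  have himage : (Finset.range m).image idx' = x.support := by
    apply Finset.eq_of_subset_of_card_le
    · intro i hi
      obtain ⟨j, hj, rfl⟩ := Finset.mem_image.mp hi
      exact hidx'_mem j (Finset.mem_range.mp hj)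
    · rw [hcard_image m le_rfl]
  -- the indicator-type vectors
  set z : ℕ → (ℕ →₀ ℝ) :=
    fun k => ∑ j ∈ Finset.range (k+1), ε' (idx' j) • Finsupp.single (idx' j) (1:ℝ) with hz
  -- NS of z k
  have hNSz : ∀ k < m, NS (z k) = ((k:ℝ)+1) / flog ((k:ℝ)+1) := by
    intro k hk
    have hzk : z k = ∑ i ∈ (Finset.range (k+1)).image idx',
        ε' i • Finsupp.single i (1:ℝ) := by
      rw [hz, Finset.sum_image]
      intro a ha b hb hab
      exact hidx'_injOn a (lt_of_lt_of_le (Finset.mem_range.mp ha) hk) b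
        (lt_of_lt_of_le (Finset.mem_range.mp hb) hk) hab
    have hcard : ((Finset.range (k+1)).image idx').card = k+1 := hcard_image (k+1) hk
    have hne : ((Finset.range (k+1)).image idx').Nonempty := by
      rw [← Finset.card_pos, hcard]; omega
    rw [hzk, hNS.signs _ hne ε' hεpm, hcard]
    push_cast
    ring_nf
  -- the decomposition
  have htel : ∀ j < m, ∑ k ∈ Finset.Ico j m, (v' k - v' (k+1)) = v' j := by
    intro j hj
    rw [Finset.sum_Ico_eq_sum_range]
    have : ∀ i : ℕ, v' (j + i) - v' (j + i + 1) = v' (j + i) - v' (j + (i + 1)) := by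
      intro i; rw [Nat.add_assoc]
    simp_rw [this]
    rw [Finset.sum_range_sub' (fun i => v' (j + i)) (m - j)]
    rw [Nat.add_zero, Nat.add_sub_cancel' (le_of_lt hj), hv'm, sub_zero]
  have hdecomp : x = ∑ k ∈ Finset.range m, (v' k - v' (k+1)) • z k := by
    have hswap : ∑ k ∈ Finset.range m, (v' k - v' (k+1)) • z k
        = ∑ j ∈ Finset.range m, ∑ k ∈ Finset.Ico j m,
            (v' k - v' (k+1)) • (ε' (idx' j) • Finsupp.single (idx' j) (1:ℝ)) := by
      simp only [hz, Finset.smul_sum]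
      simp_rw [Finset.range_eq_Ico]
      rw [← Finset.sum_Ico_Ico_comm 0 m
        (fun j k => (v' k - v' (k+1)) • (ε' (idx' j) • Finsupp.single (idx' j) (1:ℝ)))]
    rw [hswap]
    have hterm : ∀ j ∈ Finset.range m,
        (∑ k ∈ Finset.Ico j m,
          (v' k - v' (k+1)) • (ε' (idx' j) • Finsupp.single (idx' j) (1:ℝ)))
        = Finsupp.single (idx' j) (x (idx' j)) := by
      intro j hj
      have hjm := Finset.mem_range.mp hj
      rw [← Finset.sum_smul, htel j hjm, smul_smul, Finsupp.smul_single, smul_eq_mul, mul_one,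
        hval j hjm]
      ring_nf
    rw [Finset.sum_congr rfl hterm]
    have : ∑ j ∈ Finset.range m, Finsupp.single (idx' j) (x (idx' j))
        = ∑ i ∈ x.support, Finsupp.single i (x i) := by
      rw [← himage, Finset.sum_image]
      intro a ha b hb hab
      exact hidx'_injOn a (Finset.mem_range.mp ha) b (Finset.mem_range.mp hb) hab
    rw [this]
    exact (Finsupp.sum_single x).symm
  -- decreasing rearrangement bound
  have hdrear : ∀ k < m, v' k ≤ drear x (k+1) := by
    intro k hk
    simp only [drear]
    apply le_csSup
    · refine ⟨∑ i ∈ x.support, |x i|, ?_⟩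
      rintro t ⟨ht0, htc⟩
      obtain ⟨i, hi⟩ := Finset.card_pos.mp (lt_of_lt_of_le (Nat.succ_pos k) htc)
      rw [Finset.mem_filter] at hi
      exact le_trans hi.2 (Finset.single_le_sum (fun j _ => abs_nonneg (x j)) hi.1)
    · refine ⟨hv'nonneg k, ?_⟩
      have hsub : (Finset.range (k+1)).image idx' ⊆
          x.support.filter (fun i => v' k ≤ |x i|) := by
        intro i hi
        obtain ⟨j, hj, rfl⟩ := Finset.mem_image.mp hi
        have hjk := Finset.mem_range.mp hj
        have hjm : j < m := lt_of_lt_of_le hjk hk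
        refine Finset.mem_filter.mpr ⟨hidx'_mem j hjm, ?_⟩
        have hvj : v' j = |x (idx' j)| := by simp only [hv', hidx', dif_pos hjm]
        rw [← hvj]
        exact hv'anti j k (Nat.lt_succ_iff.mp hjk)
      calc k+1 = ((Finset.range (k+1)).image idx').card := (hcard_image (k+1) hk).symm
        _ ≤ _ := Finset.card_le_card hsub
  -- Abel summation and the final chain
  set c : ℕ → ℝ := fun k => (k:ℝ) / flog k with hc
  have hc0 : c 0 = 0 := by simp [hc]
  have hNSx : NS x ≤ ∑ k ∈ Finset.range m, (v' k - v' (k+1)) * c (k+1) := by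
    calc NS x = NS (∑ k ∈ Finset.range m, (v' k - v' (k+1)) • z k) := by rw [← hdecomp]
      _ ≤ ∑ k ∈ Finset.range m, NS ((v' k - v' (k+1)) • z k) := hNS.sum_le _ _
      _ ≤ _ := by
          apply Finset.sum_le_sum
          intro k hk
          have hkm := Finset.mem_range.mp hk
          rw [hNS.smul, abs_of_nonneg (sub_nonneg.mpr (hv'anti k (k+1) (Nat.le_succ k))),
            hNSz k hkm]
          have hck : c (k+1) = ((k:ℝ)+1) / flog ((k:ℝ)+1) := by
            simp only [hc]; push_cast; ring_nf
          rw [hck]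
  have habel : ∑ k ∈ Finset.range m, (v' k - v' (k+1)) * c (k+1)
      = ∑ k ∈ Finset.range m, v' k * (c (k+1) - c k) := by
    have htele := Finset.sum_range_sub' (fun k => v' k * c k) m
    have hid : ∀ k, (v' k - v' (k+1)) * c (k+1) - v' k * (c (k+1) - c k)
        = v' k * c k - v' (k+1) * c (k+1) := by intro k; ring
    rw [← sub_eq_zero, ← Finset.sum_sub_distrib]
    simp_rw [hid]
    rw [htele, hc0, hv'm]
    ring
  have hstep : ∀ k : ℕ, c (k+1) - c k ≤ 1 / flog ((k+1 : ℕ) : ℝ) := by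
    intro k
    rcases Nat.eq_zero_or_pos k with rfl | hk1
    · simp [hc, flog_zero]
    · have ha : 0 < flog ((k:ℕ):ℝ) := flog_nat_pos hk1
      have hb : 0 < flog (((k+1):ℕ):ℝ) := flog_nat_pos (le_trans hk1 (Nat.le_succ k))
      have hab : flog ((k:ℕ):ℝ) ≤ flog (((k+1):ℕ):ℝ) := flog_nat_mono_s11 (Nat.le_succ k)
      have h1 : (k:ℝ) / flog (((k+1):ℕ):ℝ) ≤ (k:ℝ) / flog ((k:ℕ):ℝ) :=
        div_le_div_of_nonneg_left (by positivity) ha hab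
      have hck : c (k+1) = (k:ℝ) / flog (((k+1):ℕ):ℝ) + 1 / flog (((k+1):ℕ):ℝ) := by
        simp only [hc]
        push_cast
        rw [← add_div]
      have hckk : c k = (k:ℝ) / flog ((k:ℕ):ℝ) := rfl
      rw [hck, hckk]
      linarith
  have hchain : ∑ k ∈ Finset.range m, v' k * (c (k+1) - c k)
      ≤ ∑ k ∈ Finset.range m, drear x (k+1) / flog ((k+1 : ℕ) : ℝ) := by
    apply Finset.sum_le_sum
    intro k hk
    have hkm := Finset.mem_range.mp hk
    have hb : 0 < flog (((k+1):ℕ):ℝ) := flog_nat_pos (Nat.succ_le_succ (Nat.zero_le k))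
    calc v' k * (c (k+1) - c k) ≤ v' k * (1 / flog (((k+1):ℕ):ℝ)) :=
          mul_le_mul_of_nonneg_left (hstep k) (hv'nonneg k)
      _ = v' k / flog (((k+1):ℕ):ℝ) := by rw [mul_one_div]
      _ ≤ drear x (k+1) / flog (((k+1):ℕ):ℝ) := by
          have := hdrear k hkm
          gcongr
  have htn : tnorm (fun i => flog i) x
      = ∑ k ∈ Finset.range m, drear x (k+1) / flog ((k+1 : ℕ) : ℝ) := by
    simp only [tnorm, ← hm]
  rw [htn]
  calc NS x ≤ _ := hNSx
    _ = _ := habel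
    _ ≤ _ := hchain
end

section
/- For all n ∈ ℕ and all ε > 0 there is N = N(n,ε) ∈ ℕ with the following property: whenever (E, ‖·‖_E) is a Banach space containing a normalized 1-subsymmetric sequence (e_i) and c ∈ (0,1] is such that ‖Σ_{j=1}^k e_j‖_E ≥ c·k/f(k) for all k ∈ ℕ, then there exist m ∈ [n, N] divisible by n and successive subsets A₁ < A₂ < … < A_n of {1,2,…,m}, each of cardinality m/n, such that the vectors x_i = (Σ_{j∈A_i} e_j)/‖Σ_{j∈A_i} e_j‖_E, i = 1,…,n, satisfy c^{1/n}·(1−ε)·Σ_{i=1}^n |a_i| ≤ ‖Σ_{i=1}^n a_i x_i‖_E ≤ Σ_{i=1}^n |a_i| for all scalars (a_i); i.e. (x_i)_{i=1}^n is c^{1/n}(1−ε)-equivalent to the unit vector basis of ℓ₁ⁿ. -/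
open Finset

namespace JamesAux

variable {E : Type} [NormedAddCommGroup E] [NormedSpace ℝ E]

/-- norm of the sum of the first `k` vectors -/
noncomputable def Sf (e : ℕ → E) (k : ℕ) : ℝ := ‖∑ t ∈ Finset.range k, e t‖

set_option linter.unusedSectionVars false in
lemma Sf_nonneg (e : ℕ → E) (k : ℕ) : 0 ≤ Sf e k := norm_nonneg _

/-- generic splitting of a sum over `range (n*L)` into blocks -/
lemma sum_range_mul {M : Type*} [AddCommMonoid M] (F : ℕ → M) (n L : ℕ) :
    ∑ s ∈ range (n * L), F s = ∑ i ∈ range n, ∑ t ∈ range L, F (i * L + t) := by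
  induction n with
  | zero => simp
  | succ n ih =>
      have h1 : (n + 1) * L = n * L + L := by ring
      rw [h1, Finset.sum_range_add, ih, Finset.sum_range_succ]

section Spread

variable (e : ℕ → E)
  (hsp : ∀ (l : ℕ) (b : ℕ → ℝ) (ns : ℕ → ℕ), StrictMono ns →
    ‖∑ t ∈ Finset.range l, b t • e (ns t)‖ = ‖∑ t ∈ Finset.range l, b t • e t‖)

include hsp

/-- padded-sum reindexing lemma -/
lemma hpad (L M : ℕ) (b : ℕ → ℝ) (ns g : ℕ → ℕ) (P : ℕ → Prop) [DecidablePred P]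
    (hns : StrictMono ns)
    (h1 : ∀ t, t < L → ns t < M ∧ P (ns t) ∧ g (ns t) = t)
    (h2 : ∀ s, s < M → P s → ∃ t, t < L ∧ ns t = s) :
    ‖∑ s ∈ range M, (if P s then b (g s) • e s else 0)‖ = ‖∑ t ∈ range L, b t • e t‖ := by
  have key : ∑ s ∈ range M, (if P s then b (g s) • e s else 0)
      = ∑ t ∈ range L, b t • e (ns t) := by
    rw [← Finset.sum_filter]
    refine Finset.sum_bij' (fun s _ => g s) (fun t _ => ns t) ?_ ?_ ?_ ?_ ?_
    · intro s hs
      simp only [mem_filter, mem_range] at hs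
      obtain ⟨t, ht, rfl⟩ := h2 s hs.1 hs.2
      show g (ns t) ∈ range L
      rw [(h1 t ht).2.2]; exact mem_range.mpr ht
    · intro t ht
      simp only [mem_range] at ht
      simp only [mem_filter, mem_range]
      exact ⟨(h1 t ht).1, (h1 t ht).2.1⟩
    · intro s hs
      simp only [mem_filter, mem_range] at hs
      obtain ⟨t, ht, rfl⟩ := h2 s hs.1 hs.2
      show ns (g (ns t)) = ns t
      rw [(h1 t ht).2.2]
    · intro t ht
      simp only [mem_range] at ht
      show g (ns t) = t
      exact (h1 t ht).2.2
    · intro s hs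
      simp only [mem_filter, mem_range] at hs
      obtain ⟨t, ht, rfl⟩ := h2 s hs.1 hs.2
      simp only [(h1 t ht).2.2]
  rw [key, hsp L b ns hns]

end Spread

section Spread2

variable (e : ℕ → E)
  (hsp : ∀ (l : ℕ) (b : ℕ → ℝ) (ns : ℕ → ℕ), StrictMono ns →
    ‖∑ t ∈ Finset.range l, b t • e (ns t)‖ = ‖∑ t ∈ Finset.range l, b t • e t‖)

include hsp

lemma ratio_step (k : ℕ) :
    (k : ℝ) * Sf e (k+1) ≤ ((k:ℝ)+1) * Sf e k := by
  classical
  have hnorm : ∀ i ∈ range (k+1), ‖∑ s ∈ range (k+1), (if s ≠ i then (1:ℝ) • e s else 0)‖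
      = Sf e k := by
    intro i hi
    have hik : i < k + 1 := mem_range.mp hi
    have h := hpad e hsp k (k+1) (fun _ => (1:ℝ)) (fun t => if t < i then t else t+1)
      (fun s => if s < i then s else s - 1) (fun s => s ≠ i)
      (by intro x y hxy; (try dsimp only); split_ifs <;> omega)
      (by intro t ht; refine ⟨?_, ?_, ?_⟩ <;> ((try dsimp only); split_ifs <;> omega))
      (by intro s hs hP; refine ⟨if s < i then s else s - 1, ?_, ?_⟩ <;>
            ((try dsimp only); split_ifs <;> omega))
    have h2 : ‖∑ t ∈ range k, (1:ℝ) • e t‖ = Sf e k := by simp [Sf]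
    exact h.trans h2
  have hsum : ∑ i ∈ range (k+1), (∑ s ∈ range (k+1), if s ≠ i then (1:ℝ) • e s else 0)
      = (k : ℝ) • ∑ s ∈ range (k+1), (1:ℝ) • e s := by
    rw [Finset.sum_comm, Finset.smul_sum]
    refine Finset.sum_congr rfl fun s hs => ?_
    have hpt : ∀ i, (if s ≠ i then (1:ℝ) • e s else 0)
        = (1:ℝ) • e s - (if s = i then (1:ℝ) • e s else 0) := by
      intro i; by_cases h : s = i <;> simp [h]
    rw [Finset.sum_congr rfl fun i _ => hpt i, Finset.sum_sub_distrib, Finset.sum_const,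
      Finset.sum_ite_eq, if_pos hs, card_range]
    rw [← Nat.cast_smul_eq_nsmul ℝ, one_smul]
    push_cast
    rw [add_smul, one_smul]
    abel
  calc (k:ℝ) * Sf e (k+1) = ‖(k:ℝ) • ∑ s ∈ range (k+1), (1:ℝ) • e s‖ := by
        rw [norm_smul, Real.norm_eq_abs, abs_of_nonneg (Nat.cast_nonneg k)]
        congr 1; simp [Sf]
    _ = ‖∑ i ∈ range (k+1), ∑ s ∈ range (k+1), (if s ≠ i then (1:ℝ) • e s else 0)‖ := by
        rw [hsum]
    _ ≤ ∑ i ∈ range (k+1), ‖∑ s ∈ range (k+1), (if s ≠ i then (1:ℝ) • e s else 0)‖ :=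
        norm_sum_le _ _
    _ = ∑ _i ∈ range (k+1), Sf e k := Finset.sum_congr rfl hnorm
    _ = ((k:ℝ)+1) * Sf e k := by
        rw [Finset.sum_const, card_range, nsmul_eq_mul]; push_cast; ring

lemma chain (a b : ℕ) (ha : 1 ≤ a) (hab : a ≤ b) :
    (a : ℝ) * Sf e b ≤ (b : ℝ) * Sf e a := by
  induction b, hab using Nat.le_induction with
  | base => exact le_of_eq rfl
  | succ b hab ih =>
    have h1 := ratio_step e hsp b
    have hb1 : (1:ℝ) ≤ (b:ℝ) := by exact_mod_cast le_trans ha hab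
    have ha0 : (0:ℝ) ≤ (a:ℝ) := by positivity
    have H : (b:ℝ) * ((a:ℝ) * Sf e (b+1)) ≤ (b:ℝ) * (((b:ℝ)+1) * Sf e a) := by
      have t1 := mul_le_mul_of_nonneg_left h1 ha0
      have t2 := mul_le_mul_of_nonneg_left ih (show (0:ℝ) ≤ (b:ℝ)+1 by linarith)
      have hc : ((b+1 : ℕ) : ℝ) = (b:ℝ)+1 := by push_cast; ring
      nlinarith [t1, t2]
    have := le_of_mul_le_mul_left (by linarith [H] :
      (b:ℝ) * ((a:ℝ) * Sf e (b+1)) ≤ (b:ℝ) * (((b:ℝ)+1) * Sf e a)) (by linarith : (0:ℝ) < (b:ℝ))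
    calc (a:ℝ) * Sf e (b+1) ≤ ((b:ℝ)+1) * Sf e a := this
      _ = ((b+1 : ℕ) : ℝ) * Sf e a := by push_cast; ring

end Spread2

section Flip

variable (e : ℕ → E)
  (hfl : ∀ (l : ℕ) (b εs : ℕ → ℝ), (∀ t, εs t = 1 ∨ εs t = -1) →
    ‖∑ t ∈ Finset.range l, (b t * εs t) • e t‖ = ‖∑ t ∈ Finset.range l, b t • e t‖)

include hfl

lemma mono (l : ℕ) (a : ℕ → ℝ) (b : ℕ → ℝ) (h : ∀ t, t < l → 0 ≤ b t ∧ b t ≤ a t) :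
    ‖∑ t ∈ range l, b t • e t‖ ≤ ‖∑ t ∈ range l, a t • e t‖ := by
  classical
  have aux : ∀ D : Finset ℕ, ∀ b : ℕ → ℝ, (∀ t, t < l → 0 ≤ b t ∧ b t ≤ a t) →
      (∀ t, t < l → t ∉ D → b t = a t) →
      ‖∑ t ∈ range l, b t • e t‖ ≤ ‖∑ t ∈ range l, a t • e t‖ := by
    intro D
    induction D using Finset.induction_on with
    | empty =>
        intro b hb hoff
        refine le_of_eq (congrArg _ (Finset.sum_congr rfl fun t ht => ?_))
        rw [hoff t (mem_range.mp ht) (Finset.notMem_empty t)]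
    | @insert i D' hiD' ih =>
        intro b hb hoff
        set b' : ℕ → ℝ := Function.update b i (a i) with hb'
        have hb'bounds : ∀ t, t < l → 0 ≤ b' t ∧ b' t ≤ a t := by
          intro t ht
          by_cases hti : t = i
          · subst hti; simp only [hb', Function.update_self]
            exact ⟨le_trans (hb t ht).1 (hb t ht).2, le_refl _⟩
          · simp only [hb', Function.update_of_ne hti]; exact hb t ht
        have hb'off : ∀ t, t < l → t ∉ D' → b' t = a t := by
          intro t ht htD
          by_cases hti : t = i
          · subst hti; simp [hb']
          · simp only [hb', Function.update_of_ne hti]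
            exact hoff t ht (by simp [hti, htD])
        have step2 := ih b' hb'bounds hb'off
        have step1 : ‖∑ t ∈ range l, b t • e t‖ ≤ ‖∑ t ∈ range l, b' t • e t‖ := by
          by_cases hil : i < l
          · set r : ℝ := if a i = 0 then 1 else b i / a i with hr
            have hbi := hb i hil
            have hai0 : 0 ≤ a i := le_trans hbi.1 hbi.2
            have hr0 : 0 ≤ r := by
              rw [hr]; split
              · norm_num
              · exact div_nonneg hbi.1 hai0
            have hr1 : r ≤ 1 := by
              rw [hr]; split
              · norm_num
              · rename_i hai
                have hai' : 0 < a i := lt_of_le_of_ne hai0 (Ne.symm hai)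
                exact (div_le_one hai').mpr hbi.2
            have hrb : r * a i = b i := by
              rw [hr]; split
              · rename_i hai
                have hbi0 : b i = 0 := le_antisymm (hai ▸ hbi.2) hbi.1
                rw [hai, hbi0, mul_zero]
              · rename_i hai; field_simp
            set εs : ℕ → ℝ := fun t => if t = i then -1 else 1 with hεs
            have hy := hfl l b' εs (fun t => by by_cases h : t = i <;> simp [hεs, h])
            have hcomb : ∑ t ∈ range l, b t • e t
                = ((1+r)/2) • (∑ t ∈ range l, b' t • e t)
                  + ((1-r)/2) • (∑ t ∈ range l, (b' t * εs t) • e t) := by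
              rw [Finset.smul_sum, Finset.smul_sum, ← Finset.sum_add_distrib]
              refine Finset.sum_congr rfl fun t ht => ?_
              rw [smul_smul, smul_smul, ← add_smul]
              congr 1
              by_cases hti : t = i
              · subst hti
                simp only [hb', hεs, Function.update_self, if_pos rfl]
                rw [← hrb]; ring
              · simp only [hb', hεs, Function.update_of_ne hti, if_neg hti]; ring
            calc ‖∑ t ∈ range l, b t • e t‖
                ≤ ((1+r)/2) * ‖∑ t ∈ range l, b' t • e t‖
                  + ((1-r)/2) * ‖∑ t ∈ range l, (b' t * εs t) • e t‖ := by
                  rw [hcomb]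
                  refine le_trans (norm_add_le _ _) ?_
                  rw [norm_smul, norm_smul, Real.norm_eq_abs, Real.norm_eq_abs,
                    abs_of_nonneg (by linarith), abs_of_nonneg (by linarith)]
              _ = ‖∑ t ∈ range l, b' t • e t‖ := by rw [hy]; ring
          · refine le_of_eq (congrArg _ (Finset.sum_congr rfl fun t ht => ?_))
            have hti : t ≠ i := by rintro rfl; exact hil (mem_range.mp ht)
            simp [hb', Function.update_of_ne hti]
        exact le_trans step1 step2
  exact aux (range l) b h (fun t ht htD => absurd (mem_range.mpr ht) htD)

end Flip

/-- coefficient pattern: `κ` below `l`, `d` at `l`, `1` above -/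
def bco (l : ℕ) (κ : ℕ → ℝ) (d : ℝ) (t : ℕ) : ℝ :=
  if t < l then κ t else if t = l then d else 1

section Split

variable (e : ℕ → E)
  (hsp : ∀ (l : ℕ) (b : ℕ → ℝ) (ns : ℕ → ℕ), StrictMono ns →
    ‖∑ t ∈ Finset.range l, b t • e (ns t)‖ = ‖∑ t ∈ Finset.range l, b t • e t‖)

include hsp

lemma split_step (l r : ℕ) (κ : ℕ → ℝ) (d : ℝ) (hd : 0 ≤ d) :
    ‖∑ s ∈ range (l+1+(r+1)), bco l κ d s • e s‖
      ≤ ‖∑ s ∈ range (l+1+r), bco l κ (d+1) s • e s‖ := by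
  classical
  have hne : d + 1 ≠ 0 := by linarith
  set v1 : E := ∑ s ∈ range (l+1+(r+1)),
    (if s ≠ l+1 then bco l κ (d+1) (if s ≤ l then s else s - 1) • e s else 0) with hv1
  set v2 : E := ∑ s ∈ range (l+1+(r+1)),
    (if s ≠ l then bco l κ (d+1) (if s < l then s else s - 1) • e s else 0) with hv2
  have hn1 : ‖v1‖ = ‖∑ s ∈ range (l+1+r), bco l κ (d+1) s • e s‖ := by
    rw [hv1]
    exact hpad e hsp (l+1+r) (l+1+(r+1)) (bco l κ (d+1))
      (fun t => if t ≤ l then t else t+1) (fun s => if s ≤ l then s else s - 1)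
      (fun s => s ≠ l+1)
      (by intro x y hxy; (try dsimp only); split_ifs <;> omega)
      (by intro t ht; refine ⟨?_, ?_, ?_⟩ <;> ((try dsimp only); split_ifs <;> omega))
      (by intro s hs hP; refine ⟨if s ≤ l then s else s - 1, ?_, ?_⟩ <;>
            ((try dsimp only); split_ifs <;> omega))
  have hn2 : ‖v2‖ = ‖∑ s ∈ range (l+1+r), bco l κ (d+1) s • e s‖ := by
    rw [hv2]
    exact hpad e hsp (l+1+r) (l+1+(r+1)) (bco l κ (d+1))
      (fun t => if t < l then t else t+1) (fun s => if s < l then s else s - 1)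
      (fun s => s ≠ l)
      (by intro x y hxy; (try dsimp only); split_ifs <;> omega)
      (by intro t ht; refine ⟨?_, ?_, ?_⟩ <;> ((try dsimp only); split_ifs <;> omega))
      (by intro s hs hP; refine ⟨if s < l then s else s - 1, ?_, ?_⟩ <;>
            ((try dsimp only); split_ifs <;> omega))
  have hcomb : ∑ s ∈ range (l+1+(r+1)), bco l κ d s • e s
      = (d/(d+1)) • v1 + (1/(d+1)) • v2 := by
    rw [hv1, hv2, Finset.smul_sum, Finset.smul_sum, ← Finset.sum_add_distrib]
    refine Finset.sum_congr rfl fun s hs => ?_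
    have hs' : s < l+1+(r+1) := mem_range.mp hs
    simp only [bco]
    split_ifs <;>
      first
        | (exfalso; omega)
        | (rw [smul_smul, smul_smul, ← add_smul]; congr 1; field_simp; try ring)
        | (rw [smul_zero, add_zero, smul_smul]; congr 1; field_simp; try ring)
        | (rw [smul_zero, zero_add, smul_smul]; congr 1; field_simp; try ring)
  calc ‖∑ s ∈ range (l+1+(r+1)), bco l κ d s • e s‖
      = ‖(d/(d+1)) • v1 + (1/(d+1)) • v2‖ := by rw [hcomb]
    _ ≤ (d/(d+1)) * ‖v1‖ + (1/(d+1)) * ‖v2‖ := by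
        refine le_trans (norm_add_le _ _) ?_
        rw [norm_smul, norm_smul, Real.norm_eq_abs, Real.norm_eq_abs,
          abs_of_nonneg (by positivity), abs_of_nonneg (by positivity)]
    _ = ‖∑ s ∈ range (l+1+r), bco l κ (d+1) s • e s‖ := by
        rw [hn1, hn2]; field_simp

lemma split_inner (l : ℕ) (κ : ℕ → ℝ) (Pn : ℕ)
    (base : ∀ r : ℕ, Sf e (Pn + r) ≤ ‖∑ s ∈ range (l + r), (if s < l then κ s else 1) • e s‖) :
    ∀ (d r : ℕ), Sf e (Pn + d + r) ≤ ‖∑ s ∈ range (l+1+r), bco l κ (d:ℝ) s • e s‖ := by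
  intro d
  induction d with
  | zero =>
      intro r
      have heq : ‖∑ s ∈ range (l+1+r), bco l κ ((0:ℕ):ℝ) s • e s‖
          = ‖∑ t ∈ range (l+r), (if t < l then κ t else 1) • e t‖ := by
        have h := hpad e hsp (l+r) (l+1+r) (fun t => if t < l then κ t else 1)
          (fun t => if t < l then t else t+1) (fun s => if s < l then s else s - 1)
          (fun s => s ≠ l)
          (by intro x y hxy; (try dsimp only); split_ifs <;> omega)
          (by intro t ht; refine ⟨?_, ?_, ?_⟩ <;> ((try dsimp only); split_ifs <;> omega))
          (by intro s hs hP; refine ⟨if s < l then s else s - 1, ?_, ?_⟩ <;>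
                ((try dsimp only); split_ifs <;> omega))
        rw [← h]
        congr 1
        refine Finset.sum_congr rfl fun s hs => ?_
        simp only [bco, Nat.cast_zero]
        split_ifs <;> first | rfl | (exfalso; omega) | simp
      rw [heq, show Pn + 0 + r = Pn + r by omega]
      exact base r
  | succ d ihd =>
      intro r
      calc Sf e (Pn + (d+1) + r)
          = Sf e (Pn + d + (r+1)) := by rw [show Pn + (d+1) + r = Pn + d + (r+1) by omega]
        _ ≤ ‖∑ s ∈ range (l+1+(r+1)), bco l κ ((d:ℕ):ℝ) s • e s‖ := ihd (r+1)
        _ ≤ ‖∑ s ∈ range (l+1+r), bco l κ ((d:ℝ)+1) s • e s‖ :=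
            split_step e hsp l r κ (d:ℝ) (by positivity)
        _ = ‖∑ s ∈ range (l+1+r), bco l κ (((d+1:ℕ)):ℝ) s • e s‖ := by
            rw [show (((d+1:ℕ)):ℝ) = (d:ℝ)+1 by push_cast; ring]

lemma lemC (l : ℕ) : ∀ (κ : ℕ → ℕ) (r : ℕ),
    Sf e ((∑ t ∈ range l, κ t) + r)
      ≤ ‖∑ s ∈ range (l + r), (if s < l then (κ s : ℝ) else 1) • e s‖ := by
  induction l with
  | zero =>
      intro κ r
      apply le_of_eq
      simp [Sf]
  | succ l ih =>
      intro κ r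
      have h := split_inner e hsp l (fun t => (κ t:ℝ)) (∑ t ∈ range l, κ t)
        (fun r => ih κ r) (κ l) r
      have hvec : ∑ s ∈ range (l+1+r), bco l (fun t => (κ t:ℝ)) ((κ l:ℕ):ℝ) s • e s
          = ∑ s ∈ range (l+1+r), (if s < l+1 then (κ s : ℝ) else 1) • e s := by
        refine Finset.sum_congr rfl fun s hs => ?_
        rcases lt_trichotomy s l with hsl | hsl | hsl
        · simp only [bco, if_pos hsl, if_pos (by omega : s < l+1)]
        · subst hsl
          simp [bco]
        · simp only [bco, if_neg (by omega : ¬ s < l), if_neg (by omega : ¬ s = l),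
            if_neg (by omega : ¬ s < l+1)]
      rw [Finset.sum_range_succ, ← hvec]
      exact h
  
end Split

lemma rpow_aux (c : ℝ) (hc0 : 0 < c) (hc1 : c ≤ 1) (n M : ℕ) (hn : 1 ≤ n) (hnM : n ≤ M) :
    (c ^ ((1:ℝ)/(n:ℝ)))^M ≤ c := by
  rw [← Real.rpow_natCast (c ^ ((1:ℝ)/(n:ℝ))) M, ← Real.rpow_mul (le_of_lt hc0)]
  have hn0 : (0:ℝ) < (n:ℝ) := by exact_mod_cast hn
  calc c ^ ((1:ℝ)/(n:ℝ) * (M:ℝ)) ≤ c ^ (1:ℝ) := by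
        apply Real.rpow_le_rpow_of_exponent_ge hc0 hc1
        rw [div_mul_eq_mul_div, one_mul, le_div_iff₀ hn0]
        have : (n:ℝ) ≤ (M:ℝ) := by exact_mod_cast hnM
        linarith
    _ = c := Real.rpow_one c

end JamesAux



set_option maxHeartbeats 1000000 in
theorem james_blocking_uniform (n : ℕ) (hn : 1 ≤ n) (ε : ℝ) (hε : 0 < ε) :
    ∃ N : ℕ, ∀ (E : Type) (_ : NormedAddCommGroup E) (_ : NormedSpace ℝ E)
      (e : ℕ → E) (c : ℝ), 0 < c → c ≤ 1 →
      -- `(e_i)` is normalized and 1-subsymmetric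
      (∀ i, ‖e i‖ = 1) →
      (∀ (l : ℕ) (a εs : Fin l → ℝ) (ns : Fin l → ℕ), StrictMono ns →
        (∀ i, εs i = 1 ∨ εs i = -1) →
        ‖∑ i, (a i * εs i) • e (ns i)‖ = ‖∑ i, a i • e (i : ℕ)‖) →
      -- lower estimate `‖∑_{j<k} e_j‖ ≥ c·k/f(k)`
      (∀ k : ℕ, 1 ≤ k → c * k / flog k ≤ ‖∑ j ∈ Finset.range k, e j‖) →
      ∃ m : ℕ, n ≤ m ∧ m ≤ N ∧ n ∣ m ∧
        ∃ A : ℕ → Finset ℕ,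
          (∀ i ∈ Finset.Icc 1 n, A i ⊆ Finset.Icc 1 m ∧ (A i).card = m / n) ∧
          (∀ i ∈ Finset.Icc 1 n, ∀ i' ∈ Finset.Icc 1 n, i < i' →
            ∀ s ∈ A i, ∀ t ∈ A i', s < t) ∧
          -- the normalized vectors `x_i = (∑_{j ∈ A_i} e_j)/‖∑_{j ∈ A_i} e_j‖` are
          -- `c^{1/n}(1-ε)`-equivalent to the unit vector basis of `ℓ₁ⁿ`
          ∀ a : ℕ → ℝ,
            c ^ ((1 : ℝ) / n) * (1 - ε) * ∑ i ∈ Finset.Icc 1 n, |a i| ≤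
              ‖∑ i ∈ Finset.Icc 1 n, (a i / ‖∑ j ∈ A i, e j‖) • (∑ j ∈ A i, e j)‖ ∧
            ‖∑ i ∈ Finset.Icc 1 n, (a i / ‖∑ j ∈ A i, e j‖) • (∑ j ∈ A i, e j)‖ ≤
              ∑ i ∈ Finset.Icc 1 n, |a i| := by

  classical
  by_cases hε1 : 1 ≤ ε
  · -- trivial branch: the lower bound is nonpositive
    refine ⟨n, ?_⟩
    intro E _ _ e c hc0 hc1 hnorm hsubsym hlower
    refine ⟨n, le_refl n, le_refl n, dvd_refl n, fun i => {i}, ?_, ?_, ?_⟩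
    · intro i hi
      rw [Finset.mem_Icc] at hi
      constructor
      · intro x hx
        rw [Finset.mem_singleton] at hx
        subst hx
        exact Finset.mem_Icc.mpr ⟨hi.1, hi.2⟩
      · simp [Nat.div_self (show 0 < n by omega)]
    · intro i _ i' _ hii' s hs t ht
      rw [Finset.mem_singleton] at hs ht
      omega
    · intro a
      constructor
      · have h1 : c ^ ((1:ℝ)/n) * (1-ε) ≤ 0 :=
          mul_nonpos_of_nonneg_of_nonpos (Real.rpow_nonneg (le_of_lt hc0) _) (by linarith)
        have h2 : (0:ℝ) ≤ ∑ i ∈ Finset.Icc 1 n, |a i| :=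
          Finset.sum_nonneg fun i _ => abs_nonneg _
        calc c ^ ((1:ℝ)/n) * (1-ε) * ∑ i ∈ Finset.Icc 1 n, |a i| ≤ 0 :=
              mul_nonpos_of_nonpos_of_nonneg h1 h2
          _ ≤ _ := norm_nonneg _
      · refine le_trans (norm_sum_le _ _) (Finset.sum_le_sum fun i _ => ?_)
        rw [norm_smul, Real.norm_eq_abs]
        simp [Finset.sum_singleton, hnorm i]
  · push_neg at hε1
    -- main branch
    have hεh0 : 0 < ε/2 := by linarith
    have hεh1 : ε/2 < 1 := by linarith
    set Q : ℕ := ⌈(2*(n:ℝ))/ε⌉₊ with hQdef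
    have hQ2 : 2 ≤ Q := by
      have h1 : (1:ℝ) < 2*(n:ℝ)/ε := by
        rw [lt_div_iff₀ hε]
        have : (1:ℝ) ≤ (n:ℝ) := by exact_mod_cast hn
        nlinarith
      have h2 : 1 < Q := Nat.lt_ceil.mpr (by exact_mod_cast h1)
      omega
    have hQ1R : (1:ℝ) ≤ (Q:ℝ) := by exact_mod_cast Nat.one_le_of_lt hQ2
    set C : ℝ := Real.logb 2 (Q:ℝ) with hCdef
    have hC0 : 0 ≤ C := Real.logb_nonneg (by norm_num) hQ1R
    set K0 : ℕ := max n ⌈(2*C+2)/(ε/2)^2⌉₊ with hK0def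
    have hK0n : n ≤ K0 := le_max_left _ _
    have hK01 : 1 ≤ K0 := le_trans hn hK0n
    set M : ℕ := 2*K0 with hMdef
    have hMn : n ≤ M := by omega
    have hM1 : 1 ≤ M := by omega
    have hMkey : (1 - ε/2)^M * ((M:ℝ)*C + 1) < 1 := by
      have hKC : 2*C+2 ≤ (K0:ℝ)*(ε/2)^2 := by
        have h1 : (2*C+2)/(ε/2)^2 ≤ (⌈(2*C+2)/(ε/2)^2⌉₊ : ℝ) := Nat.le_ceil _
        have h2 : ((⌈(2*C+2)/(ε/2)^2⌉₊ : ℕ):ℝ) ≤ (K0:ℝ) := by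
          exact_mod_cast le_max_right n _
        have h3 := le_trans h1 h2
        rw [div_le_iff₀ (by positivity)] at h3
        linarith
      have hbern : 1 + (K0:ℝ)*(ε/2) ≤ (1+ε/2)^K0 :=
        one_add_mul_le_pow (show (-2:ℝ) ≤ ε/2 by linarith) K0
      have hKpos : (1:ℝ) ≤ (K0:ℝ) := by exact_mod_cast hK01
      have hup : (M:ℝ)*C + 1 < (1+ε/2)^M := by
        have e1 : (1+ε/2)^M = ((1+ε/2)^K0)^2 := by
          rw [hMdef, show 2*K0 = K0*2 by ring, pow_mul]
        have e2 : (1 + (K0:ℝ)*(ε/2))^2 ≤ ((1+ε/2)^K0)^2 :=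
          pow_le_pow_left₀ (by nlinarith) hbern 2
        have hMcast : (M:ℝ) = 2*(K0:ℝ) := by rw [hMdef]; push_cast; ring
        have e3 : ((K0:ℝ)*(ε/2))^2 = (K0:ℝ)*((K0:ℝ)*(ε/2)^2) := by ring
        nlinarith [mul_le_mul_of_nonneg_left hKC (show (0:ℝ) ≤ (K0:ℝ) by positivity)]
      have hlo : 0 < (1-ε/2)^M := pow_pos (by linarith) M
      calc (1-ε/2)^M * ((M:ℝ)*C+1) < (1-ε/2)^M * (1+ε/2)^M :=
            mul_lt_mul_of_pos_left hup hlo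
        _ = ((1-ε/2)*(1+ε/2))^M := by rw [mul_pow]
        _ ≤ 1 := by
            apply pow_le_one₀ (by nlinarith) (by nlinarith)
    clear_value Q C K0 M
    refine ⟨n * Q^M, ?_⟩
    intro E _ _ e c hc0 hc1 hnorm hsubsym hlower
    -- derived subsymmetry hypotheses
    have hsp : ∀ (l : ℕ) (b : ℕ → ℝ) (ns : ℕ → ℕ), StrictMono ns →
        ‖∑ t ∈ Finset.range l, b t • e (ns t)‖ = ‖∑ t ∈ Finset.range l, b t • e t‖ := by
      intro l b ns hns
      have h := hsubsym l (fun i => b i) (fun _ => 1) (fun i => ns i)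
        (fun i j hij => hns hij) (fun i => Or.inl rfl)
      simp only [mul_one] at h
      rwa [Fin.sum_univ_eq_sum_range (fun t => b t • e (ns t)) l,
        Fin.sum_univ_eq_sum_range (fun t => b t • e t) l] at h
    have hfl : ∀ (l : ℕ) (b εs : ℕ → ℝ), (∀ t, εs t = 1 ∨ εs t = -1) →
        ‖∑ t ∈ Finset.range l, (b t * εs t) • e t‖ = ‖∑ t ∈ Finset.range l, b t • e t‖ := by
      intro l b εs hεs
      have h := hsubsym l (fun i => b i) (fun i => εs i) (fun i => (i:ℕ))
        (fun i j hij => hij) (fun i => hεs i)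
      rwa [Fin.sum_univ_eq_sum_range (fun t => (b t * εs t) • e t) l,
        Fin.sum_univ_eq_sum_range (fun t => b t • e t) l] at h
    -- basics about S
    have hS1 : JamesAux.Sf e 1 = 1 := by
      simp [JamesAux.Sf, hnorm 0]
    have hSpos : ∀ k : ℕ, 1 ≤ k → 0 < JamesAux.Sf e k := by
      intro k hk
      have hl := hlower k hk
      have hflogpos : 0 < flog (k:ℝ) := by
        apply Real.logb_pos (by norm_num)
        have : (1:ℝ) ≤ (k:ℝ) := by exact_mod_cast hk
        linarith
      have hpos : 0 < c * (k:ℝ) / flog (k:ℝ) := by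
        apply div_pos _ hflogpos
        have : (0:ℝ) < (k:ℝ) := by exact_mod_cast hk
        positivity
      exact lt_of_lt_of_le hpos hl
    set θ : ℝ := c ^ ((1:ℝ)/(n:ℝ)) * (1 - ε/2) with hθdef
    have hθ0 : 0 < θ := mul_pos (Real.rpow_pos_of_pos hc0 _) (by linarith)
    clear_value θ
    -- pigeonhole: a good scale exists
    have key : ∃ j, j < M ∧ θ * ((Q:ℝ) * JamesAux.Sf e (Q^j)) ≤ JamesAux.Sf e (Q^(j+1)) := by
      by_contra hcon
      push_neg at hcon
      have iter : ∀ j, j ≤ M → JamesAux.Sf e (Q^j) ≤ θ^j * (Q:ℝ)^j := by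
        intro j
        induction j with
        | zero => intro _; simp [hS1]
        | succ j ih =>
            intro hjM
            have h1 := hcon j (by omega)
            have h2 := ih (by omega)
            have hmono : θ * ((Q:ℝ) * JamesAux.Sf e (Q^j)) ≤ θ * ((Q:ℝ) * (θ^j * (Q:ℝ)^j)) := by
              apply mul_le_mul_of_nonneg_left _ (le_of_lt hθ0)
              apply mul_le_mul_of_nonneg_left h2 (by positivity)
            calc JamesAux.Sf e (Q^(j+1)) ≤ θ * ((Q:ℝ) * (θ^j * (Q:ℝ)^j)) :=
                  le_of_lt (lt_of_lt_of_le h1 hmono)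
              _ = θ^(j+1) * (Q:ℝ)^(j+1) := by ring
      have hQM1 : 1 ≤ Q^M := Nat.one_le_pow _ _ (by omega)
      have hlow := hlower (Q^M) hQM1
      have hcastQM : ((Q^M : ℕ):ℝ) = (Q:ℝ)^M := by push_cast; ring
      have hQMpos : (0:ℝ) < (Q:ℝ)^M := by positivity
      have hQMge1 : (1:ℝ) ≤ (Q:ℝ)^M := one_le_pow₀ hQ1R
      have hflogle : flog ((Q^M : ℕ):ℝ) ≤ (M:ℝ)*C + 1 := by
        rw [flog, hcastQM]
        have h1 : (Q:ℝ)^M + 1 ≤ 2*(Q:ℝ)^M := by nlinarith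
        calc Real.logb 2 ((Q:ℝ)^M + 1) ≤ Real.logb 2 (2*(Q:ℝ)^M) :=
              Real.logb_le_logb_of_le (by norm_num) (by positivity) h1
          _ = 1 + (M:ℝ)*C := by
              rw [Real.logb_mul (by norm_num) (by positivity),
                Real.logb_self_eq_one (by norm_num), Real.logb_pow, hCdef]
          _ ≤ (M:ℝ)*C + 1 := by linarith
      have hflogpos : 0 < flog ((Q^M : ℕ):ℝ) := by
        rw [flog, hcastQM]
        apply Real.logb_pos (by norm_num)
        linarith
      have hMC1 : (0:ℝ) < (M:ℝ)*C + 1 := by positivity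
      have hA : c * (Q:ℝ)^M / ((M:ℝ)*C+1) ≤ JamesAux.Sf e (Q^M) := by
        calc c * (Q:ℝ)^M / ((M:ℝ)*C+1) ≤ c * (Q:ℝ)^M / flog ((Q^M:ℕ):ℝ) := by
              apply div_le_div_of_nonneg_left (by positivity) hflogpos hflogle
          _ ≤ JamesAux.Sf e (Q^M) := by
              rw [← hcastQM] at *
              exact hlow
      have hθM : θ^M ≤ c * (1-ε/2)^M := by
        rw [hθdef, mul_pow]
        exact mul_le_mul_of_nonneg_right (JamesAux.rpow_aux c hc0 hc1 n M hn hMn)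
          (pow_nonneg (by linarith) M)
      have hSQM := iter M (le_refl M)
      have final : c * (Q:ℝ)^M/((M:ℝ)*C+1) ≤ c*(1-ε/2)^M * (Q:ℝ)^M := by
        refine le_trans hA (le_trans hSQM ?_)
        exact mul_le_mul_of_nonneg_right hθM (le_of_lt hQMpos)
      rw [div_le_iff₀ hMC1] at final
      have hcontr := mul_lt_mul_of_pos_left hMkey (mul_pos hc0 hQMpos)
      linarith [final, hcontr]
    obtain ⟨j, hjM, hjgood⟩ := key
    set L : ℕ := Q^j with hLdef
    have hL1 : 1 ≤ L := Nat.one_le_pow _ _ (by omega)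
    have hL0 : 0 < L := hL1
    clear_value L
    set m : ℕ := n * L with hmdef
    have hmn : n ≤ m := by
      calc n = n * 1 := by ring
        _ ≤ n * L := Nat.mul_le_mul_left n hL1
    have hmN : m ≤ n * Q^M := by
      rw [hmdef]
      have h1 : L ≤ Q^M := by
        rw [hLdef]
        exact Nat.pow_le_pow_right (by omega) (by omega)
      exact Nat.mul_le_mul_left n h1
    have hmdiv : m / n = L := Nat.mul_div_cancel_left L (by omega)
    -- block norms
    have hu : ∀ i, 1 ≤ i → i ≤ n →
        ‖∑ j ∈ Finset.Icc ((i-1)*L+1) (i*L), e j‖ = JamesAux.Sf e L := by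
      intro i h1 h2
      have hIL : (i-1)*L + L = i*L := by
        have h3 : i - 1 + 1 = i := by omega
        calc (i-1)*L + L = (i-1+1)*L := by rw [Nat.succ_mul]
          _ = i*L := by rw [h3]
      have hcard : i*L + 1 - ((i-1)*L+1) = L := by omega
      have hIcc : ∑ j ∈ Finset.Icc ((i-1)*L+1) (i*L), e j
          = ∑ t ∈ range L, e ((i-1)*L+1+t) := by
        rw [← Finset.Ico_add_one_right_eq_Icc, Finset.sum_Ico_eq_sum_range, hcard]
      rw [hIcc]
      have h := hsp L (fun _ => (1:ℝ)) (fun t => (i-1)*L+1+t)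
        (by intro x y hxy; dsimp only; omega)
      simpa [JamesAux.Sf, one_smul] using h
    -- block sums as flat sums
    have hblock : ∀ w : ℕ → ℝ,
        ∑ i ∈ Finset.Icc 1 n, w i • (∑ j ∈ Finset.Icc ((i-1)*L+1) (i*L), e j)
          = ∑ s ∈ range (n*L), w (s/L + 1) • e (1 + s) := by
      intro w
      rw [JamesAux.sum_range_mul (fun s => w (s/L + 1) • e (1 + s)) n L]
      rw [← Finset.Ico_add_one_right_eq_Icc, Finset.sum_Ico_eq_sum_range]
      simp only [Nat.succ_sub_one, Nat.add_sub_cancel]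
      refine Finset.sum_congr rfl fun i _ => ?_
      have hIcc : ∑ j ∈ Finset.Icc ((1+i-1)*L+1) ((1+i)*L), e j
          = ∑ t ∈ range L, e (i*L+1+t) := by
        have h1 : (1+i-1) = i := by omega
        have h3 : (1+i)*L = i*L + L := by ring
        have h2 : (1+i)*L + 1 - (i*L+1) = L := by omega
        rw [h1, ← Finset.Ico_add_one_right_eq_Icc, Finset.sum_Ico_eq_sum_range, h2]
      rw [hIcc, Finset.smul_sum]
      refine Finset.sum_congr rfl fun t ht => ?_
      have hdiv : (i*L + t)/L + 1 = 1 + i := by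
        have h0 : i*L + t = t + L*i := by ring
        rw [h0, Nat.add_mul_div_left t i hL0, Nat.div_eq_of_lt (mem_range.mp ht)]
        omega
      have hidx : i*L+1+t = 1+(i*L+t) := by omega
      rw [hdiv, hidx]
    have hSL := hSpos L hL1
    refine ⟨m, hmn, hmN, ⟨L, rfl⟩, (fun i => Finset.Icc ((i-1)*L+1) (i*L)), ?_, ?_, ?_⟩
    · intro i hi
      rw [Finset.mem_Icc] at hi
      have hIL : (i-1)*L + L = i*L := by
        have h3 : i - 1 + 1 = i := by omega
        calc (i-1)*L + L = (i-1+1)*L := by rw [Nat.succ_mul]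
          _ = i*L := by rw [h3]
      constructor
      · intro x hx
        rw [Finset.mem_Icc] at hx ⊢
        have hiL : i * L ≤ n * L := Nat.mul_le_mul_right L hi.2
        omega
      · rw [Nat.card_Icc, hmdef, Nat.mul_div_cancel_left L (by omega)]
        omega
    · intro i hi i' hi' hlt s hs t ht
      rw [Finset.mem_Icc] at hi hi' hs ht
      have h1 : i ≤ i' - 1 := by omega
      have h2 : i * L ≤ (i'-1) * L := Nat.mul_le_mul_right L h1
      omega
    · intro a
      have hu' : ∀ i ∈ Finset.Icc 1 n,
          ‖∑ j ∈ Finset.Icc ((i-1)*L+1) (i*L), e j‖ = JamesAux.Sf e L := by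
        intro i hi
        rw [Finset.mem_Icc] at hi
        exact hu i hi.1 hi.2
      constructor
      · -- lower bound
        have hX1 : ∑ i ∈ Finset.Icc 1 n,
              (a i / ‖∑ j ∈ Finset.Icc ((i-1)*L+1) (i*L), e j‖) •
                (∑ j ∈ Finset.Icc ((i-1)*L+1) (i*L), e j)
            = ∑ s ∈ range (n*L), (a (s/L+1)/JamesAux.Sf e L) • e (1+s) := by
          rw [← hblock (fun i => a i / JamesAux.Sf e L)]
          exact Finset.sum_congr rfl fun i hi => by rw [hu' i hi]
        have hnormeq : ‖∑ s ∈ range (n*L), (a (s/L+1)/JamesAux.Sf e L) • e (1+s)‖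
            = ‖∑ s ∈ range (n*L), (|a (s/L+1)|/JamesAux.Sf e L) • e s‖ := by
          rw [hsp (n*L) (fun s => a (s/L+1)/JamesAux.Sf e L) (fun s => 1+s)
            (by intro x y h; dsimp only; omega)]
          have h := hfl (n*L) (fun s => a (s/L+1)/JamesAux.Sf e L)
            (fun s => if a (s/L+1) < 0 then -1 else 1)
            (fun s => by by_cases h : a (s/L+1) < 0 <;> simp [h])
          refine Eq.trans h.symm (congrArg _ (Finset.sum_congr rfl fun s _ => ?_))
          show (a (s/L+1)/JamesAux.Sf e L * (if a (s/L+1) < 0 then -1 else 1)) • e s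
            = (|a (s/L+1)|/JamesAux.Sf e L) • e s
          by_cases hneg : a (s/L+1) < 0
          · rw [if_pos hneg, abs_of_neg hneg]
            congr 1
            ring
          · rw [if_neg hneg, abs_of_nonneg (not_lt.mp hneg)]
            congr 1
            ring
        set Amass : ℝ := ∑ i ∈ Finset.Icc 1 n, |a i| with hAm
        have hAmnonneg : 0 ≤ Amass := Finset.sum_nonneg fun i _ => abs_nonneg _
        by_cases hA0 : Amass ≤ 0
        · have hA0' : Amass = 0 := le_antisymm hA0 hAmnonneg
          calc c ^ ((1:ℝ)/(n:ℝ)) * (1-ε) * Amass = 0 := by rw [hA0', mul_zero]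
            _ ≤ _ := norm_nonneg _
        · push_neg at hA0
          set η : ℝ := ε/(2*(n:ℝ)) with hη
          have hn0R : (0:ℝ) < (n:ℝ) := by exact_mod_cast hn
          have hη0 : 0 < η := by rw [hη]; positivity
          have hnη : (n:ℝ)*η = ε/2 := by rw [hη]; field_simp
          set k : ℕ → ℕ := fun i => ⌊|a i|/(Amass*η)⌋₊ with hk
          set Kb : ℕ := ∑ i ∈ Finset.Icc 1 n, k i with hKsum
          have hAη : 0 < Amass * η := mul_pos hA0 hη0
          have hfloorle : ∀ i, (k i : ℝ) * (Amass*η) ≤ |a i| := by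
            intro i
            have h1 : (k i:ℝ) ≤ |a i|/(Amass*η) := by
              rw [hk]
              exact Nat.floor_le (div_nonneg (abs_nonneg _) (le_of_lt hAη))
            calc (k i:ℝ) * (Amass*η) ≤ (|a i|/(Amass*η)) * (Amass*η) :=
                  mul_le_mul_of_nonneg_right h1 (le_of_lt hAη)
              _ = |a i| := div_mul_cancel₀ _ (ne_of_gt hAη)
          have hKup : (Kb:ℝ) * (Amass*η) ≤ Amass := by
            have h1 : ∑ i ∈ Finset.Icc 1 n, (k i:ℝ) * (Amass*η)
                ≤ ∑ i ∈ Finset.Icc 1 n, |a i| :=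
              Finset.sum_le_sum (fun i _ => hfloorle i)
            calc (Kb:ℝ)*(Amass*η) = ∑ i ∈ Finset.Icc 1 n, (k i:ℝ)*(Amass*η) := by
                  rw [← Finset.sum_mul, hKsum]
                  push_cast
                  ring
              _ ≤ Amass := h1
          have hKlow : Amass - (n:ℝ)*(Amass*η) ≤ (Kb:ℝ)*(Amass*η) := by
            have h1 : ∀ i ∈ Finset.Icc 1 n, |a i| ≤ ((k i:ℝ)+1)*(Amass*η) := by
              intro i _
              have h2 : |a i|/(Amass*η) < (k i:ℝ) + 1 := by
                rw [hk]
                exact Nat.lt_floor_add_one _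
              rw [div_lt_iff₀ hAη] at h2
              linarith
            have h2 : Amass ≤ ∑ i ∈ Finset.Icc 1 n, ((k i:ℝ)+1)*(Amass*η) :=
              Finset.sum_le_sum h1
            have h3 : ∑ i ∈ Finset.Icc 1 n, ((k i:ℝ)+1)*(Amass*η)
                = (Kb:ℝ)*(Amass*η) + (n:ℝ)*(Amass*η) := by
              rw [← Finset.sum_mul, Finset.sum_add_distrib, Finset.sum_const,
                Nat.card_Icc]
              simp only [Nat.add_sub_cancel, nsmul_eq_mul, mul_one]
              rw [hKsum]
              push_cast
              ring
            linarith
          have hKη : 1 - (n:ℝ)*η ≤ η*(Kb:ℝ) := by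
            have h4 : Amass * (1 - (n:ℝ)*η) ≤ Amass * (η * (Kb:ℝ)) := by nlinarith [hKlow]
            exact le_of_mul_le_mul_left h4 hA0
          have hKb1 : 1 ≤ Kb := by
            by_contra hcon
            have hKb0 : (Kb:ℝ) = 0 := by
              have : Kb = 0 := by omega
              rw [this]; norm_num
            rw [hKb0, mul_zero] at hKη
            rw [hnη] at hKη
            linarith
          have hKbQ : Kb ≤ Q := by
            have h2 : (Kb:ℝ) ≤ 1/η := by
              rw [le_div_iff₀ hη0]
              have h5 : Amass * ((Kb:ℝ) * η) ≤ Amass * 1 := by nlinarith [hKup]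
              exact le_of_mul_le_mul_left h5 hA0
            have h3 : 1/η = 2*(n:ℝ)/ε := by
              rw [hη]
              field_simp
            have h4 : (2*(n:ℝ)/ε) ≤ (Q:ℝ) := by
              rw [hQdef]
              exact Nat.le_ceil _
            have : (Kb:ℝ) ≤ (Q:ℝ) := by linarith
            exact_mod_cast this
          -- the coefficient pattern
          have hmono : ‖∑ s ∈ range (n*L), ((Amass*η)*((k (s/L+1)):ℝ)/JamesAux.Sf e L) • e s‖
              ≤ ‖∑ s ∈ range (n*L), (|a (s/L+1)|/JamesAux.Sf e L) • e s‖ := by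
            apply JamesAux.mono e hfl
            intro t _
            constructor
            · exact div_nonneg (mul_nonneg (le_of_lt hAη) (Nat.cast_nonneg _))
                (le_of_lt hSL)
            · refine (div_le_div_iff_of_pos_right hSL).mpr ?_
              rw [mul_comm (Amass*η) ((k (t/L+1)):ℝ)]
              exact hfloorle (t/L+1)
          have hfactor : ∑ s ∈ range (n*L), ((Amass*η)*((k (s/L+1)):ℝ)/JamesAux.Sf e L) • e s
              = ((Amass*η)/JamesAux.Sf e L) • ∑ s ∈ range (n*L), ((k (s/L+1)):ℝ) • e s := by
            rw [Finset.smul_sum]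
            refine Finset.sum_congr rfl fun s _ => ?_
            rw [smul_smul]
            congr 1
            ring
          have hκsum : ∑ s ∈ range (n*L), k (s/L+1) = L * Kb := by
            rw [JamesAux.sum_range_mul (fun s => k (s/L + 1)) n L]
            have h1 : ∀ i ∈ range n, ∑ t ∈ range L, k ((i*L+t)/L+1) = L * k (i+1) := by
              intro i _
              have hconst : ∀ t ∈ range L, k ((i*L+t)/L+1) = k (i+1) := by
                intro t ht
                congr 1
                have h0 : i*L + t = t + L*i := by ring
                rw [h0, Nat.add_mul_div_left t i hL0, Nat.div_eq_of_lt (mem_range.mp ht)]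
                omega
              rw [Finset.sum_congr rfl hconst, Finset.sum_const, card_range, smul_eq_mul]
            rw [Finset.sum_congr rfl h1, ← Finset.mul_sum]
            congr 1
            rw [hKsum, ← Finset.Ico_add_one_right_eq_Icc, Finset.sum_Ico_eq_sum_range]
            simp only [Nat.succ_sub_one, Nat.add_sub_cancel]
            exact Finset.sum_congr rfl fun i _ => by rw [Nat.add_comm]
          have hlemC : JamesAux.Sf e (L * Kb)
              ≤ ‖∑ s ∈ range (n*L), ((k (s/L+1)):ℝ) • e s‖ := by
            have h := JamesAux.lemC e hsp (n*L) (fun s => k (s/L+1)) 0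
            simp only [Nat.add_zero] at h
            rw [hκsum] at h
            refine le_trans h (le_of_eq (congrArg _ (Finset.sum_congr rfl fun s hs => ?_)))
            rw [if_pos (mem_range.mp hs)]
          have hchain := JamesAux.chain e hsp (Kb*L) (Q*L)
            (by have := Nat.mul_le_mul hKb1 hL1; omega)
            (Nat.mul_le_mul_right L hKbQ)
          have hQL : Q^(j+1) = Q*L := by rw [hLdef, pow_succ]; ring
          have hSKL : θ * (Kb:ℝ) * JamesAux.Sf e L ≤ JamesAux.Sf e (Kb*L) := by
            have h1 : θ * ((Q:ℝ) * JamesAux.Sf e L) ≤ JamesAux.Sf e (Q*L) := by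
              rw [← hQL]
              exact hjgood
            have h2 : ((Kb*L:ℕ):ℝ) * (θ * ((Q:ℝ) * JamesAux.Sf e L))
                ≤ ((Kb*L:ℕ):ℝ) * JamesAux.Sf e (Q*L) :=
              mul_le_mul_of_nonneg_left h1 (Nat.cast_nonneg _)
            have h3 := le_trans h2 hchain
            have hQL0 : (0:ℝ) < ((Q*L:ℕ):ℝ) := by
              have : 0 < Q*L := Nat.mul_pos (by omega) hL0
              exact_mod_cast this
            have h4 : ((Q*L:ℕ):ℝ) * (θ*(Kb:ℝ)*JamesAux.Sf e L)
                ≤ ((Q*L:ℕ):ℝ) * JamesAux.Sf e (Kb*L) := by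
              have hrearr : ((Q*L:ℕ):ℝ) * (θ*(Kb:ℝ)*JamesAux.Sf e L)
                  = ((Kb*L:ℕ):ℝ) * (θ * ((Q:ℝ) * JamesAux.Sf e L)) := by
                push_cast
                ring
              rw [hrearr]
              exact h3
            exact le_of_mul_le_mul_left h4 hQL0
          have hdivnonneg : (0:ℝ) ≤ (Amass*η)/JamesAux.Sf e L :=
            div_nonneg (le_of_lt hAη) (le_of_lt hSL)
          calc c ^ ((1:ℝ)/(n:ℝ)) * (1-ε) * Amass
              ≤ θ * (1-ε/2) * Amass := by
                have h1 : c ^ ((1:ℝ)/(n:ℝ)) * (1-ε) ≤ θ * (1-ε/2) := by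
                  rw [hθdef]
                  have hc' : 0 ≤ c ^ ((1:ℝ)/(n:ℝ)) := Real.rpow_nonneg (le_of_lt hc0) _
                  nlinarith [hc', mul_nonneg hc' (sq_nonneg ε)]
                exact mul_le_mul_of_nonneg_right h1 hAmnonneg
            _ ≤ θ * (η * (Kb:ℝ)) * Amass := by
                have h1 : θ * (1-ε/2) ≤ θ * (η*(Kb:ℝ)) := by
                  apply mul_le_mul_of_nonneg_left _ (le_of_lt hθ0)
                  linarith [hKη, hnη]
                exact mul_le_mul_of_nonneg_right h1 hAmnonneg
            _ = ((Amass*η)/JamesAux.Sf e L) * (θ * (Kb:ℝ) * JamesAux.Sf e L) := by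
                field_simp
            _ ≤ ((Amass*η)/JamesAux.Sf e L) * JamesAux.Sf e (Kb*L) :=
                mul_le_mul_of_nonneg_left hSKL hdivnonneg
            _ ≤ ((Amass*η)/JamesAux.Sf e L)
                  * ‖∑ s ∈ range (n*L), ((k (s/L+1)):ℝ) • e s‖ := by
                refine mul_le_mul_of_nonneg_left ?_ hdivnonneg
                rw [show Kb*L = L*Kb by ring]
                exact hlemC
            _ = ‖∑ s ∈ range (n*L), ((Amass*η)*((k (s/L+1)):ℝ)/JamesAux.Sf e L) • e s‖ := by
                rw [hfactor, norm_smul, Real.norm_eq_abs, abs_of_nonneg hdivnonneg]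
            _ ≤ ‖∑ s ∈ range (n*L), (|a (s/L+1)|/JamesAux.Sf e L) • e s‖ := hmono
            _ = _ := by rw [← hnormeq, ← hX1]
      · -- upper bound
        refine le_trans (norm_sum_le _ _) (Finset.sum_le_sum fun i hi => ?_)
        rw [norm_smul, Real.norm_eq_abs, hu' i hi, abs_div,
          abs_of_pos hSL, div_mul_cancel₀ _ (ne_of_gt hSL)]
end

section
/- Let ‖·‖ be a norm on c₀₀ such that ‖E(x)‖ ≤ ‖x‖ for every x ∈ c₀₀ and every interval E ⊆ ℕ, where E(x) is the coordinatewise restriction of x to E, and for l ∈ ℕ set ‖x‖_l = (1/f(l))·max_{E₁<E₂<…<E_l intervals} Σ_{i=1}^l ‖E_i(x)‖. If x = (1/n)·Σ_{i=1}^n x_i, where x₁ < x₂ < … < x_n is a block sequence with ‖x_i‖ ≤ 1 for each i (i.e. x is an ℓ₁^{+n}-average), then for every l ∈ ℕ, ‖x‖_l ≤ (1/f(l))·(1 + l/n). -/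
/-- `x` is an `ℓ₁^{+n}`-average for the norm `N`: `x = (1/n) ∑_{i=1}^n x_i` for a block
sequence `x₁ < … < x_n` in the unit ball of `N`. -/
def IsL1PlusAverage (N : (ℕ →₀ ℝ) → ℝ) (n : ℕ) (x : ℕ →₀ ℝ) : Prop :=
  ∃ xs : ℕ → (ℕ →₀ ℝ),
    (∀ i ∈ Finset.Icc 1 n, N (xs i) ≤ 1 ∧ xs i ≠ 0) ∧
    (∀ i ∈ Finset.Icc 1 n, ∀ i' ∈ Finset.Icc 1 n, i < i' →
      ∀ s ∈ (xs i).support, ∀ t ∈ (xs i').support, s < t) ∧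
    x = (1 / (n : ℝ)) • ∑ i ∈ Finset.Icc 1 n, xs i

private lemma restrictF_add' (E : Finset ℕ) (x y : ℕ →₀ ℝ) :
    restrictF E (x + y) = restrictF E x + restrictF E y := by
  simp [restrictF, Finsupp.single_add, Finset.sum_add_distrib]

private lemma restrictF_smul' (E : Finset ℕ) (c : ℝ) (x : ℕ →₀ ℝ) :
    restrictF E (c • x) = c • restrictF E x := by
  simp [restrictF, Finsupp.smul_single, Finset.smul_sum]

private lemma restrictF_sum' {ι : Type*} (E : Finset ℕ) (s : Finset ι) (v : ι → ℕ →₀ ℝ) :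
    restrictF E (∑ j ∈ s, v j) = ∑ j ∈ s, restrictF E (v j) := by
  classical
  induction s using Finset.cons_induction with
  | empty => simp [restrictF]
  | cons a s ha ih => rw [Finset.sum_cons, Finset.sum_cons, restrictF_add', ih]

private lemma restrictF_eq_zero' (E : Finset ℕ) (x : ℕ →₀ ℝ) (h : ∀ i ∈ E, x i = 0) :
    restrictF E x = 0 :=
  Finset.sum_eq_zero fun i hi => by simp [h i hi]

private lemma N_sum_le' (N : (ℕ →₀ ℝ) → ℝ) (h0 : N 0 = 0)
    (hadd : ∀ x y, N (x + y) ≤ N x + N y) {ι : Type*} (s : Finset ι) (v : ι → ℕ →₀ ℝ) :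
    N (∑ j ∈ s, v j) ≤ ∑ j ∈ s, N (v j) := by
  classical
  induction s using Finset.cons_induction with
  | empty => simp [h0]
  | cons a s ha ih =>
    simp only [Finset.sum_cons]
    exact (hadd _ _).trans (by linarith)

theorem norm_l_le_of_l1_plus_average (N : (ℕ →₀ ℝ) → ℝ)
    (hnonneg : ∀ x, 0 ≤ N x)
    (hzero : ∀ x, N x = 0 → x = 0)
    (hsmul : ∀ (c : ℝ) (x : ℕ →₀ ℝ), N (c • x) = |c| * N x)
    (hadd : ∀ x y, N (x + y) ≤ N x + N y)
    (hrestrict : ∀ (x : ℕ →₀ ℝ) (E : Finset ℕ), IsNatInterval E → N (restrictF E x) ≤ N x)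
    (n : ℕ) (hn : 1 ≤ n) (x : ℕ →₀ ℝ) (hx : IsL1PlusAverage N n x) :
    ∀ l : ℕ, 1 ≤ l →
      sSup {r : ℝ | ∃ E : Fin l → Finset ℕ, (∀ i, IsNatInterval (E i)) ∧
        (∀ i j : Fin l, i < j → ∀ s ∈ E i, ∀ t ∈ E j, s < t) ∧
        r = (1 / flog l) * ∑ i, N (restrictF (E i) x)} ≤
      (1 / flog l) * (1 + (l : ℝ) / n) := by
  obtain ⟨xs, hxs1, hxs2, hxeq⟩ := hx
  intro l hl
  have hN0 : N 0 = 0 := by simpa using hsmul 0 0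
  have hflog : (1:ℝ) ≤ flog l := by
    have h2 : (2:ℝ) ≤ (l:ℝ) + 1 := by
      have : (1:ℝ) ≤ (l:ℝ) := by exact_mod_cast hl
      linarith
    have hlog2 : (0:ℝ) < Real.log 2 := Real.log_pos (by norm_num)
    rw [flog, Real.logb, le_div_iff₀ hlog2, one_mul]
    exact Real.log_le_log (by norm_num) h2
  have hfpos : (0:ℝ) < flog l := lt_of_lt_of_le one_pos hflog
  have hnpos : (0:ℝ) < (n:ℝ) := by exact_mod_cast hn
  have hbd : (0:ℝ) ≤ 1 / flog l * (1 + (l:ℝ) / n) := by positivity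
  apply Real.sSup_le _ hbd
  rintro r ⟨E, hEint, hEord, rfl⟩
  -- bound each term via the blocks
  classical
  set T : Finset (Fin l × ℕ) :=
    (Finset.univ ×ˢ Finset.Icc 1 n).filter
      (fun p : Fin l × ℕ => ¬ ∀ s ∈ E p.1, xs p.2 s = 0) with hT
  have hTcard : T.card ≤ l - 1 + n := by
    have : T.card ≤ (Finset.Icc 1 (l - 1 + n)).card := by
      apply Finset.card_le_card_of_injOn (fun p => (p.1 : ℕ) + p.2)
      · rintro ⟨i, j⟩ hp
        rw [Finset.mem_coe, hT, Finset.mem_filter, Finset.mem_product, Finset.mem_Icc] at hp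
        obtain ⟨⟨-, hj1, hj2⟩, -⟩ := hp
        simp only [Finset.coe_Icc, Set.mem_Icc]
        constructor
        · omega
        · have : (i : ℕ) ≤ l - 1 := by omega
          omega
      · rintro ⟨i, j⟩ hp ⟨i', j'⟩ hp' heq
        simp only at heq
        rw [Finset.mem_coe, hT, Finset.mem_filter, Finset.mem_product,
          Finset.mem_Icc] at hp hp'
        push_neg at hp hp'
        obtain ⟨⟨-, hj1, hj2⟩, s, hsE, hsne⟩ := hp
        obtain ⟨⟨-, hj1', hj2'⟩, t, htE, htne⟩ := hp'
        have hs : s ∈ (xs j).support := Finsupp.mem_support_iff.mpr hsne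
        have ht : t ∈ (xs j').support := Finsupp.mem_support_iff.mpr htne
        have hij : (i : ℕ) = (i' : ℕ) := by
          by_contra hne
          rcases Nat.lt_or_ge (i : ℕ) (i' : ℕ) with hlt | hge
          · -- i < i' so s < t; also j' < j forced, so t < s
            have hst : s < t := hEord i i' (by exact_mod_cast hlt) s hsE t htE
            have hjj : j' < j := by omega
            have hts : t < s := hxs2 j' (Finset.mem_Icc.mpr ⟨hj1', hj2'⟩) j
              (Finset.mem_Icc.mpr ⟨hj1, hj2⟩) hjj t ht s hs
            omega
          · have hlt' : (i' : ℕ) < (i : ℕ) := by omega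
            have hts : t < s := hEord i' i (by exact_mod_cast hlt') t htE s hsE
            have hjj : j < j' := by omega
            have hst : s < t := hxs2 j (Finset.mem_Icc.mpr ⟨hj1, hj2⟩) j'
              (Finset.mem_Icc.mpr ⟨hj1', hj2'⟩) hjj s hs t ht
            omega
        have : i = i' := Fin.ext hij
        subst this
        have : j = j' := by omega
        simp [this]
    simpa [Nat.card_Icc] using this
  have hterm : ∀ i : Fin l,
      N (restrictF (E i) x) ≤ (1/(n:ℝ)) * ∑ j ∈ Finset.Icc 1 n, N (restrictF (E i) (xs j)) := by
    intro i
    rw [hxeq, restrictF_smul', hsmul, abs_of_nonneg (by positivity), restrictF_sum']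
    have := N_sum_le' N hN0 hadd (Finset.Icc 1 n) (fun j => restrictF (E i) (xs j))
    have h1n : (0:ℝ) ≤ 1/(n:ℝ) := by positivity
    exact mul_le_mul_of_nonneg_left this h1n
  have hdouble : ∑ i, ∑ j ∈ Finset.Icc 1 n, N (restrictF (E i) (xs j)) ≤ (T.card : ℝ) := by
    rw [← Finset.sum_product']
    have hzero' : ∀ p ∈ (Finset.univ ×ˢ Finset.Icc 1 n) \ T,
        N (restrictF (E p.1) (xs p.2)) = 0 := by
      rintro ⟨i, j⟩ hp
      simp only [hT, Finset.mem_sdiff, Finset.mem_filter, not_and, not_not] at hp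
      obtain ⟨hmem, h2⟩ := hp
      rw [restrictF_eq_zero' _ _ (h2 hmem), hN0]
    have heq : ∑ p ∈ Finset.univ ×ˢ Finset.Icc 1 n, N (restrictF (E p.1) (xs p.2))
        = ∑ p ∈ T, N (restrictF (E p.1) (xs p.2)) := by
      refine (Finset.sum_subset (Finset.filter_subset _ _) ?_).symm
      intro p hp hpn
      exact hzero' p (Finset.mem_sdiff.mpr ⟨hp, hpn⟩)
    rw [heq]
    calc ∑ p ∈ T, N (restrictF (E p.1) (xs p.2)) ≤ ∑ _p ∈ T, (1:ℝ) := by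
          apply Finset.sum_le_sum
          rintro ⟨i, j⟩ hp
          simp only [hT, Finset.mem_filter, Finset.mem_product, Finset.mem_univ,
            Finset.mem_Icc, true_and] at hp
          exact (hrestrict (xs j) (E i) (hEint i)).trans
            (hxs1 j (Finset.mem_Icc.mpr hp.1)).1
      _ = (T.card : ℝ) := by simp
  have key : ∑ i, N (restrictF (E i) x) ≤ 1 + (l:ℝ)/n := by
    have h1 : ∑ i, N (restrictF (E i) x)
        ≤ (1/(n:ℝ)) * ∑ i, ∑ j ∈ Finset.Icc 1 n, N (restrictF (E i) (xs j)) := by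
      rw [Finset.mul_sum]
      exact Finset.sum_le_sum fun i _ => hterm i
    have h2 : (1/(n:ℝ)) * ∑ i, ∑ j ∈ Finset.Icc 1 n, N (restrictF (E i) (xs j))
        ≤ (1/(n:ℝ)) * (T.card : ℝ) :=
      mul_le_mul_of_nonneg_left hdouble (by positivity)
    have h3 : (T.card : ℝ) ≤ (l:ℝ) - 1 + n := by
      have : (T.card : ℝ) ≤ ((l - 1 + n : ℕ) : ℝ) := by exact_mod_cast hTcard
      have hc : ((l - 1 + n : ℕ) : ℝ) = (l:ℝ) - 1 + n := by
        push_cast [Nat.cast_sub hl]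
        ring
      linarith [hc ▸ this]
    have hne : (n:ℝ) ≠ 0 := ne_of_gt hnpos
    have e1 : (1/(n:ℝ)) * ((l:ℝ) - 1 + n) = 1 + ((l:ℝ)-1)/n := by
      field_simp
      ring
    have e2 : ((l:ℝ)-1)/n ≤ (l:ℝ)/n := by gcongr <;> linarith
    have h4 : (1/(n:ℝ)) * (T.card : ℝ) ≤ 1 + (l:ℝ)/n := by
      have := mul_le_mul_of_nonneg_left h3 (by positivity : (0:ℝ) ≤ 1/(n:ℝ))
      linarith [e1 ▸ this]
    linarith
  exact mul_le_mul_of_nonneg_left key (by positivity)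
end
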